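/- arXiv:1409.0165 — 6 statements merged into one kernel-verified Lean document; each statement's English description precedes it below -/
import Mathlib

section
/- Let ((x'_k),(w_k)) be an O-frame for T ∈ L(X,W). Then the O-frame is boundedly complete (i.e., for every x'' ∈ X** the series ∑_k ⟨x'', x'_k⟩ w_k converges in W) if and only if for every x'' ∈ X**, boundedness of the sequence of partial sums (∑_{k=1}^N ⟨x'', x'_k⟩ w_k)_N in W implies convergence of the series ∑_k ⟨x'', x'_k⟩ w_k in W. -/
open Filter Topology

/-- O-frame: for every x, the series converges in norm to T x. -/
def IsOFrame {X W : Type*} [NormedAddCommGroup X] [NormedSpace ℝ X]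
    [NormedAddCommGroup W] [NormedSpace ℝ W]
    (T : X →L[ℝ] W) (x' : ℕ → (X →L[ℝ] ℝ)) (w : ℕ → W) : Prop :=
  ∀ x : X, Tendsto (fun N => ∑ k ∈ Finset.range N, x' k x • w k) atTop (𝓝 (T x))

/-- An O-frame is boundedly complete iff boundedness of partial sums implies convergence. -/
theorem oframe_boundedlyComplete_iff {X W : Type*}
    [NormedAddCommGroup X] [NormedSpace ℝ X] [CompleteSpace X]
    [NormedAddCommGroup W] [NormedSpace ℝ W] [CompleteSpace W]
    (T : X →L[ℝ] W) (x' : ℕ → (X →L[ℝ] ℝ)) (w : ℕ → W)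
    (hF : IsOFrame T x' w) :
    (∀ x'' : (X →L[ℝ] ℝ) →L[ℝ] ℝ, ∃ w₀ : W,
        Tendsto (fun N => ∑ k ∈ Finset.range N, x'' (x' k) • w k) atTop (𝓝 w₀))
      ↔
    (∀ x'' : (X →L[ℝ] ℝ) →L[ℝ] ℝ,
        (∃ M : ℝ, ∀ N, ‖∑ k ∈ Finset.range N, x'' (x' k) • w k‖ ≤ M) →
        ∃ w₀ : W,
          Tendsto (fun N => ∑ k ∈ Finset.range N, x'' (x' k) • w k) atTop (𝓝 w₀)) := by
  constructor
  · intro h x'' _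
    exact h x''
  · intro h x''
    apply h x''
    -- the partial sum operators
    set U : ℕ → X →L[ℝ] W := fun N => ∑ k ∈ Finset.range N, (x' k).smulRight (w k) with hU
    have hUx : ∀ N x, U N x = ∑ k ∈ Finset.range N, x' k x • w k := by
      intro N x
      simp [hU, ContinuousLinearMap.sum_apply]
    -- pointwise boundedness from convergence
    have hpt : ∀ x : X, ∃ C, ∀ N, ‖U N x‖ ≤ C := by
      intro x
      obtain ⟨C, hC⟩ := (hF x).norm.bddAbove_range
      exact ⟨C, fun N => by simpa [hUx] using hC ⟨N, rfl⟩⟩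
    obtain ⟨C, hC⟩ := banach_steinhaus hpt
    set C' : ℝ := max C 0 with hC'
    have hC'nn : 0 ≤ C' := le_max_right _ _
    have hCU : ∀ N, ‖U N‖ ≤ C' := fun N => (hC N).trans (le_max_left _ _)
    refine ⟨C' * ‖x''‖, fun N => ?_⟩
    apply NormedSpace.norm_le_dual_bound ℝ _ (by positivity)
    intro f
    -- f applied to the partial sum equals x'' applied to f ∘ U N
    have key : f (∑ k ∈ Finset.range N, x'' (x' k) • w k) = x'' (f.comp (U N)) := by
      have hcomp : f.comp (U N) = ∑ k ∈ Finset.range N, f (w k) • x' k := by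
        ext x
        simp [hUx, map_sum, mul_comm]
      rw [hcomp, map_sum, map_sum]
      simp [mul_comm]
    rw [key]
    calc ‖x'' (f.comp (U N))‖ ≤ ‖x''‖ * ‖f.comp (U N)‖ := x''.le_opNorm _
      _ ≤ ‖x''‖ * (‖f‖ * ‖U N‖) :=
          mul_le_mul_of_nonneg_left (f.opNorm_comp_le (U N)) (ContinuousLinearMap.opNorm_nonneg _)
      _ ≤ ‖x''‖ * (‖f‖ * C') := by
          have h1 : ‖f‖ * ‖U N‖ ≤ ‖f‖ * C' :=
            mul_le_mul_of_nonneg_left (hCU N) (ContinuousLinearMap.opNorm_nonneg _)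
          exact mul_le_mul_of_nonneg_left h1 (ContinuousLinearMap.opNorm_nonneg _)
      _ = C' * ‖x''‖ * ‖f‖ := by ring
end

section
/- Let ((x'_k),(w_k)) be an O-frame for T ∈ L(X,W). Then for every x'' ∈ X** and w' ∈ W*, the sequence of partial sums ∑_{k=1}^N ⟨w', w_k⟩ ⟨x'', x'_k⟩ is bounded; consequently the sequence (∑_{k=1}^N ⟨x'', x'_k⟩ w_k)_N is norm-bounded in W. -/
open Filter Topology

/-- For an O-frame, the doubly-paired partial sums are bounded, and consequently
the partial sums ∑_{k<N} ⟨x'', x'_k⟩ w_k are norm-bounded in W. -/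
theorem oframe_partialSums_bounded {X W : Type*}
    [NormedAddCommGroup X] [NormedSpace ℝ X] [CompleteSpace X]
    [NormedAddCommGroup W] [NormedSpace ℝ W] [CompleteSpace W]
    (T : X →L[ℝ] W) (x' : ℕ → (X →L[ℝ] ℝ)) (w : ℕ → W)
    (hF : IsOFrame T x' w) :
    (∀ (x'' : (X →L[ℝ] ℝ) →L[ℝ] ℝ) (w' : W →L[ℝ] ℝ),
        ∃ M : ℝ, ∀ N, |∑ k ∈ Finset.range N, w' (w k) * x'' (x' k)| ≤ M) ∧
    (∀ x'' : (X →L[ℝ] ℝ) →L[ℝ] ℝ,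
        ∃ M : ℝ, ∀ N, ‖∑ k ∈ Finset.range N, x'' (x' k) • w k‖ ≤ M) := by
  classical
  -- The partial-sum operators S N : X →L W
  set S : ℕ → (X →L[ℝ] W) := fun N => ∑ k ∈ Finset.range N, (x' k).smulRight (w k) with hS
  have hSapp : ∀ N x, S N x = ∑ k ∈ Finset.range N, x' k x • w k := by
    intro N x
    simp [hS, ContinuousLinearMap.sum_apply]
  -- pointwise boundedness from convergence
  have hptwise : ∀ x : X, ∃ C : ℝ, ∀ N, ‖S N x‖ ≤ C := by
    intro x
    have h := (hF x).norm.bddAbove_range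
    obtain ⟨C, hC⟩ := h
    exact ⟨C, fun N => by
      have := hC (Set.mem_range_self N)
      simpa [hSapp] using this⟩
  -- Banach–Steinhaus
  obtain ⟨C, hC⟩ := banach_steinhaus hptwise
  -- First part
  have part1 : ∀ (x'' : (X →L[ℝ] ℝ) →L[ℝ] ℝ) (w' : W →L[ℝ] ℝ),
      ∃ M : ℝ, ∀ N, |∑ k ∈ Finset.range N, w' (w k) * x'' (x' k)| ≤ M := by
    intro x'' w'
    refine ⟨‖x''‖ * (‖w'‖ * C), fun N => ?_⟩
    have hcomp : w'.comp (S N) = ∑ k ∈ Finset.range N, w' (w k) • x' k := by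
      ext x
      simp [hS, ContinuousLinearMap.sum_apply, Finset.mul_sum, mul_comm]
    have hval : ∑ k ∈ Finset.range N, w' (w k) * x'' (x' k) = x'' (w'.comp (S N)) := by
      rw [hcomp, map_sum]
      simp [mul_comm]
    rw [hval]
    calc |x'' (w'.comp (S N))| = ‖x'' (w'.comp (S N))‖ := rfl
      _ ≤ ‖x''‖ * ‖w'.comp (S N)‖ := x''.le_opNorm _
      _ ≤ ‖x''‖ * (‖w'‖ * ‖S N‖) :=
          mul_le_mul_of_nonneg_left ((w'.opNorm_comp_le (S N))) (norm_nonneg x'')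
      _ ≤ ‖x''‖ * (‖w'‖ * C) := by
          have h0 : (0:ℝ) ≤ ‖S 0‖ := norm_nonneg _
          have hC0 : (0:ℝ) ≤ C := le_trans h0 (hC 0)
          gcongr
          exact hC N
  refine ⟨part1, ?_⟩
  -- Second part: weakly bounded implies norm bounded
  intro x''
  set u : ℕ → W := fun N => ∑ k ∈ Finset.range N, x'' (x' k) • w k with hu
  set g : ℕ → ((W →L[ℝ] ℝ) →L[ℝ] ℝ) := fun N => NormedSpace.inclusionInDoubleDual ℝ W (u N)
    with hg
  have hpt : ∀ w' : W →L[ℝ] ℝ, ∃ M : ℝ, ∀ N, ‖g N w'‖ ≤ M := by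
    intro w'
    obtain ⟨M, hM⟩ := part1 x'' w'
    refine ⟨M, fun N => ?_⟩
    have : g N w' = ∑ k ∈ Finset.range N, w' (w k) * x'' (x' k) := by
      simp [hg, hu, NormedSpace.inclusionInDoubleDual, map_sum, mul_comm]
    rw [this]
    simpa [Real.norm_eq_abs] using hM N
  obtain ⟨M, hM⟩ := banach_steinhaus fun w' => hpt w'
  refine ⟨M, fun N => ?_⟩
  have hnorm : ‖g N‖ = ‖u N‖ := by
    exact (NormedSpace.inclusionInDoubleDualLi ℝ (E := W)).norm_map (u N)
  calc ‖∑ k ∈ Finset.range N, x'' (x' k) • w k‖ = ‖u N‖ := rfl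
    _ = ‖g N‖ := hnorm.symm
    _ ≤ M := hM N
end

section
/- If T ∈ L(X,W) admits an O-frame ((x'_k),(w_k)) that is both boundedly complete and shrinking, then T is weakly compact; indeed T** maps X** into W (identified with its canonical image in W**), with T** x'' = ∑_k ⟨x'', x'_k⟩ w_k. -/
open Filter Topology

/-- If T has a boundedly complete and shrinking O-frame then T is weakly compact:
T** maps X** into (the canonical image of) W, with T'' x'' = ∑ ⟨x'', x'_k⟩ w_k. -/
theorem oframe_weaklyCompact {X W : Type*}
    [NormedAddCommGroup X] [NormedSpace ℝ X] [CompleteSpace X]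
    [NormedAddCommGroup W] [NormedSpace ℝ W] [CompleteSpace W]
    (T : X →L[ℝ] W) (x' : ℕ → (X →L[ℝ] ℝ)) (w : ℕ → W)
    (hF : IsOFrame T x' w)
    (hbc : ∀ x'' : (X →L[ℝ] ℝ) →L[ℝ] ℝ, ∃ w₀ : W,
        Tendsto (fun N => ∑ k ∈ Finset.range N, x'' (x' k) • w k) atTop (𝓝 w₀))
    (hsh : ∀ w' : W →L[ℝ] ℝ, ∃ L : X →L[ℝ] ℝ,
        Tendsto (fun N => ∑ k ∈ Finset.range N, w' (w k) • x' k) atTop (𝓝 L)) :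
    ∀ x'' : (X →L[ℝ] ℝ) →L[ℝ] ℝ, ∃ w₀ : W,
      (∀ w' : W →L[ℝ] ℝ, x'' (w'.comp T) = w' w₀) ∧
      Tendsto (fun N => ∑ k ∈ Finset.range N, x'' (x' k) • w k) atTop (𝓝 w₀) := by

  intro x''
  obtain ⟨w₀, hw₀⟩ := hbc x''
  refine ⟨w₀, ?_, hw₀⟩
  intro w'
  obtain ⟨L, hL⟩ := hsh w'
  -- L = w'.comp T
  have hLT : L = w'.comp T := by
    ext x
    have h1 : Tendsto (fun N => (∑ k ∈ Finset.range N, w' (w k) • x' k) x) atTop (𝓝 (L x)) :=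
      ((ContinuousLinearMap.apply ℝ ℝ x).continuous.tendsto L).comp hL
    have h2 : Tendsto (fun N => (∑ k ∈ Finset.range N, w' (w k) • x' k) x) atTop
        (𝓝 (w' (T x))) := by
      have := (w'.continuous.tendsto (T x)).comp (hF x)
      convert this using 2 with N
      simp [ContinuousLinearMap.sum_apply, mul_comm, smul_eq_mul]
    exact tendsto_nhds_unique h1 h2
  rw [← hLT]
  have h3 : Tendsto (fun N => x'' (∑ k ∈ Finset.range N, w' (w k) • x' k)) atTop
      (𝓝 (x'' L)) := (x''.continuous.tendsto L).comp hL
  have h4 : Tendsto (fun N => w' (∑ k ∈ Finset.range N, x'' (x' k) • w k)) atTop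
      (𝓝 (w' w₀)) := (w'.continuous.tendsto w₀).comp hw₀
  have heq : (fun N => x'' (∑ k ∈ Finset.range N, w' (w k) • x' k)) =
      (fun N => w' (∑ k ∈ Finset.range N, x'' (x' k) • w k)) := by
    funext N
    simp [mul_comm]
  rw [heq] at h3
  exact tendsto_nhds_unique h3 h4
end

section
/- A bounded operator T ∈ L(X,W) between Banach spaces admits an O-frame if and only if T factors through a Banach space with a Schauder basis, i.e., T = j ∘ A with A ∈ L(X,Z), j ∈ L(Z,W), Z a Banach space with a Schauder basis. -/
open Filter Topology

/-- A Banach space together with a Schauder basis. -/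
structure BanachWithBasis where
  carrier : Type
  [grp : NormedAddCommGroup carrier]
  [mod : NormedSpace ℝ carrier]
  [compl : CompleteSpace carrier]
  vec : ℕ → carrier
  coord : ℕ → carrier →L[ℝ] ℝ
  biorth : ∀ k j, coord k (vec j) = if k = j then 1 else 0
  expand : ∀ z : carrier,
    Tendsto (fun N => ∑ k ∈ Finset.range N, coord k z • vec k) atTop (𝓝 z)

attribute [instance] BanachWithBasis.grp BanachWithBasis.mod BanachWithBasis.compl


section OFrameAux

open BoundedContinuousFunction

variable {W : Type*} [NormedAddCommGroup W] [NormedSpace ℝ W]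

open Classical in
noncomputable def OFgam (w : ℕ → W) (k : ℕ) : ℝ := if w k = 0 then 1 else ‖w k‖

lemma OFgam_pos (w : ℕ → W) (k : ℕ) : 0 < OFgam w k := by
  unfold OFgam
  split
  · norm_num
  · exact norm_pos_iff.mpr ‹_›

noncomputable def OFwt (w : ℕ → W) (k : ℕ) : ℝ := (2:ℝ)⁻¹ ^ k * OFgam w k

lemma OFwt_pos (w : ℕ → W) (k : ℕ) : 0 < OFwt w k :=
  mul_pos (pow_pos (by norm_num) _) (OFgam_pos w k)

/-- Partial sums of the series `∑ c k • w k`. -/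
def OFPS (w : ℕ → W) (c : ℕ → ℝ) (N : ℕ) : W := ∑ k ∈ Finset.range N, c k • w k

lemma OFPS_add (w : ℕ → W) (c c' : ℕ → ℝ) (N : ℕ) :
    OFPS w (c + c') N = OFPS w c N + OFPS w c' N := by
  simp [OFPS, add_smul, Finset.sum_add_distrib]

lemma OFPS_neg (w : ℕ → W) (c : ℕ → ℝ) (N : ℕ) :
    OFPS w (-c) N = -OFPS w c N := by
  simp [OFPS]

lemma OFPS_smul (w : ℕ → W) (r : ℝ) (c : ℕ → ℝ) (N : ℕ) :
    OFPS w (r • c) N = r • OFPS w c N := by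
  simp [OFPS, Finset.smul_sum, mul_smul]

/-- The key coefficient-sequence space: sequences whose weighted series converges
and whose weighted coefficients tend to zero. -/
structure OFSeq (w : ℕ → W) : Type where
  c : ℕ → ℝ
  conv : ∃ L, Tendsto (OFPS w c) atTop (𝓝 L)
  small : Tendsto (fun k => OFwt w k * c k) atTop (𝓝 0)

namespace OFSeq

variable {w : ℕ → W}

@[ext] lemma ext {a b : OFSeq w} (h : a.c = b.c) : a = b := by
  cases a; cases b; cases h; rfl

instance : Zero (OFSeq w) :=
  ⟨⟨0, ⟨0, by
      have : (OFPS w 0) = fun _ : ℕ => (0:W) := by funext N; simp [OFPS]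
      rw [this]; exact tendsto_const_nhds⟩,
    by simpa using (tendsto_const_nhds : Tendsto (fun _ : ℕ => (0:ℝ)) atTop (𝓝 0))⟩⟩

instance : Add (OFSeq w) :=
  ⟨fun a b => ⟨a.c + b.c,
    by
      obtain ⟨La, ha⟩ := a.conv
      obtain ⟨Lb, hb⟩ := b.conv
      exact ⟨La + Lb, (ha.add hb).congr fun N => (OFPS_add w a.c b.c N).symm⟩,
    by simpa [mul_add] using a.small.add b.small⟩⟩

instance : Neg (OFSeq w) :=
  ⟨fun a => ⟨-a.c,
    by
      obtain ⟨L, h⟩ := a.conv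
      exact ⟨-L, h.neg.congr fun N => (OFPS_neg w a.c N).symm⟩,
    by simpa [mul_neg] using a.small.neg⟩⟩

instance : SMul ℝ (OFSeq w) :=
  ⟨fun r a => ⟨r • a.c,
    by
      obtain ⟨L, h⟩ := a.conv
      exact ⟨r • L, (h.const_smul r).congr fun N => (OFPS_smul w r a.c N).symm⟩,
    by simpa [mul_left_comm] using a.small.const_mul r⟩⟩

@[simp] lemma zero_c : (0 : OFSeq w).c = 0 := rfl
@[simp] lemma add_c (a b : OFSeq w) : (a + b).c = a.c + b.c := rfl
@[simp] lemma neg_c (a : OFSeq w) : (-a).c = -a.c := rfl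
@[simp] lemma smul_c (r : ℝ) (a : OFSeq w) : (r • a).c = r • a.c := rfl

instance : AddCommGroup (OFSeq w) where
  add_assoc a b c := by ext1; simp [add_assoc]
  zero_add a := by ext1; simp
  add_zero a := by ext1; simp
  add_comm a b := by ext1; simp [add_comm]
  neg_add_cancel a := by ext1; simp
  nsmul := nsmulRec
  zsmul := zsmulRec

@[simp] lemma sub_c (a b : OFSeq w) : (a - b).c = a.c - b.c := by
  rw [sub_eq_add_neg, add_c, neg_c, sub_eq_add_neg]

instance : Module ℝ (OFSeq w) where
  one_smul a := by ext1; simp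
  mul_smul r s a := by ext1; simp [mul_smul]
  smul_zero r := by ext1; simp
  smul_add r a b := by ext1; simp
  add_smul r s a := by ext1; funext k; simp; ring
  zero_smul a := by ext1; simp

lemma bddF (z : OFSeq w) : ∃ C, ∀ N, ‖OFPS w z.c N‖ ≤ C := by
  obtain ⟨L, hL⟩ := z.conv
  obtain ⟨C, hC⟩ := hL.norm.bddAbove_range
  exact ⟨C, fun N => hC (Set.mem_range_self N)⟩

lemma bddG (z : OFSeq w) : ∃ C, ∀ k, ‖OFwt w k * z.c k‖ ≤ C := by
  obtain ⟨C, hC⟩ := z.small.norm.bddAbove_range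
  exact ⟨C, fun k => hC (Set.mem_range_self k)⟩

/-- Bounded function of partial sums. -/
noncomputable def F (z : OFSeq w) : ℕ →ᵇ W :=
  ofNormedAddCommGroupDiscrete (OFPS w z.c) z.bddF.choose z.bddF.choose_spec

@[simp] lemma F_apply (z : OFSeq w) (N : ℕ) : z.F N = OFPS w z.c N := rfl

/-- Bounded function of weighted coefficients. -/
noncomputable def G (z : OFSeq w) : ℕ →ᵇ ℝ :=
  ofNormedAddCommGroupDiscrete (fun k => OFwt w k * z.c k) z.bddG.choose z.bddG.choose_spec

@[simp] lemma G_apply (z : OFSeq w) (k : ℕ) : z.G k = OFwt w k * z.c k := rfl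

end OFSeq

/-- The linear embedding into a product of bounded-function spaces. -/
noncomputable def OFJ (w : ℕ → W) : OFSeq w →ₗ[ℝ] (ℕ →ᵇ W) × (ℕ →ᵇ ℝ) where
  toFun z := (z.F, z.G)
  map_add' a b := by
    refine Prod.ext ?_ ?_
    · ext N; simp [OFPS_add]
    · ext k; simp [mul_add]
  map_smul' r a := by
    refine Prod.ext ?_ ?_
    · ext N; simp [OFPS_smul]
    · ext k; simp; ring

lemma OFJ_injective (w : ℕ → W) : Function.Injective (OFJ w) := by
  intro a b h
  ext1; funext k
  have h2 := congrArg (fun p : (ℕ →ᵇ W) × (ℕ →ᵇ ℝ) => p.2 k) h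
  simp [OFJ] at h2
  exact h2.resolve_right (OFwt_pos w k).ne'

noncomputable instance (w : ℕ → W) : NormedAddCommGroup (OFSeq w) :=
  NormedAddCommGroup.induced _ _ (OFJ w) (OFJ_injective w)

noncomputable instance (w : ℕ → W) : NormedSpace ℝ (OFSeq w) :=
  ⟨fun r z => by
    change ‖OFJ w (r • z)‖ ≤ ‖r‖ * ‖OFJ w z‖
    rw [map_smul]
    exact norm_smul_le r (OFJ w z)⟩

lemma OFSeq.norm_def (w : ℕ → W) (z : OFSeq w) : ‖z‖ = ‖z.F‖ ⊔ ‖z.G‖ := rfl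

lemma OFSeq.norm_F_le (w : ℕ → W) (z : OFSeq w) : ‖z.F‖ ≤ ‖z‖ := le_sup_left
lemma OFSeq.norm_G_le (w : ℕ → W) (z : OFSeq w) : ‖z.G‖ ≤ ‖z‖ := le_sup_right

end OFrameAux

section OFrameAux2

open BoundedContinuousFunction

variable {W : Type*} [NormedAddCommGroup W] [NormedSpace ℝ W]

lemma OF_isClosed_conv [CompleteSpace W] :
    IsClosed {f : ℕ →ᵇ W | ∃ L, Tendsto (fun N => f N) atTop (𝓝 L)} := by
  refine isClosed_of_closure_subset ?_
  intro f hf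
  have hcau : CauchySeq (fun N => f N) := by
    rw [Metric.cauchySeq_iff]
    intro ε hε
    obtain ⟨g, hg, hfg⟩ := Metric.mem_closure_iff.mp hf (ε/3) (by linarith)
    obtain ⟨L, hL⟩ := hg
    obtain ⟨N, hN⟩ := Metric.cauchySeq_iff.mp hL.cauchySeq (ε/3) (by linarith)
    refine ⟨N, fun m hm n hn => ?_⟩
    have h1 : dist (f m) (g m) ≤ dist f g := dist_coe_le_dist m
    have h2 : dist (g n) (f n) ≤ dist f g := by
      rw [dist_comm]; exact dist_coe_le_dist n
    calc dist (f m) (f n) ≤ dist (f m) (g m) + dist (g m) (g n) + dist (g n) (f n) :=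
          dist_triangle4 _ _ _ _
      _ < ε := by have := hN m hm n hn; linarith
  exact cauchySeq_tendsto_of_complete hcau

lemma OF_isClosed_zero :
    IsClosed {f : ℕ →ᵇ ℝ | Tendsto (fun k => f k) atTop (𝓝 0)} := by
  refine isClosed_of_closure_subset ?_
  intro f hf
  show Tendsto (fun k => f k) atTop (𝓝 0)
  rw [Metric.tendsto_atTop]
  intro ε hε
  obtain ⟨g, hg, hfg⟩ := Metric.mem_closure_iff.mp hf (ε/2) (by linarith)
  obtain ⟨N, hN⟩ := Metric.tendsto_atTop.mp hg (ε/2) (by linarith)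
  refine ⟨N, fun n hn => ?_⟩
  have h1 : dist (f n) (g n) ≤ dist f g := dist_coe_le_dist n
  calc dist (f n) 0 ≤ dist (f n) (g n) + dist (g n) 0 := dist_triangle _ _ _
    _ < ε := by have := hN n hn; linarith

open Classical in
/-- The image set of the embedding `OFJ`. -/
def OFS (w : ℕ → W) : Set ((ℕ →ᵇ W) × (ℕ →ᵇ ℝ)) :=
  ({p | ∀ N, p.1 N = ∑ k ∈ Finset.range N, ((OFwt w k)⁻¹ * p.2 k) • w k} ∩
    ((fun p : (ℕ →ᵇ W) × (ℕ →ᵇ ℝ) => p.1) ⁻¹'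
      {f : ℕ →ᵇ W | ∃ L, Tendsto (fun N => f N) atTop (𝓝 L)})) ∩
  ((fun p : (ℕ →ᵇ W) × (ℕ →ᵇ ℝ) => p.2) ⁻¹'
    {f : ℕ →ᵇ ℝ | Tendsto (fun k => f k) atTop (𝓝 0)})

lemma OF_range_eq (w : ℕ → W) : Set.range (OFJ w) = OFS w := by
  ext p
  constructor
  · rintro ⟨z, rfl⟩
    refine ⟨⟨fun N => ?_, ?_⟩, ?_⟩
    · show z.F N = _
      rw [OFSeq.F_apply, OFPS]
      refine Finset.sum_congr rfl fun k _ => ?_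
      show z.c k • w k = ((OFwt w k)⁻¹ * z.G k) • w k
      rw [OFSeq.G_apply, inv_mul_cancel_left₀ (OFwt_pos w k).ne']
    · obtain ⟨L, hL⟩ := z.conv
      exact ⟨L, hL⟩
    · show Tendsto (fun k => z.G k) atTop (𝓝 0)
      simpa using z.small
  · rintro ⟨⟨h1, ⟨L, hL⟩⟩, h0⟩
    refine ⟨⟨fun k => (OFwt w k)⁻¹ * p.2 k, ⟨L, hL.congr h1⟩, ?_⟩, ?_⟩
    · refine h0.congr fun k => ?_
      rw [mul_inv_cancel_left₀ (OFwt_pos w k).ne']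
    · refine Prod.ext ?_ ?_
      · ext N
        exact ((h1 N).symm : _)
      · ext k
        show OFwt w k * ((OFwt w k)⁻¹ * p.2 k) = p.2 k
        rw [mul_inv_cancel_left₀ (OFwt_pos w k).ne']

lemma OF_isClosed_S [CompleteSpace W] (w : ℕ → W) : IsClosed (OFS w) := by
  refine IsClosed.inter (IsClosed.inter ?_ ?_) ?_
  · have : {p : (ℕ →ᵇ W) × (ℕ →ᵇ ℝ) |
        ∀ N, p.1 N = ∑ k ∈ Finset.range N, ((OFwt w k)⁻¹ * p.2 k) • w k} =
        ⋂ N, {p : (ℕ →ᵇ W) × (ℕ →ᵇ ℝ) |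
          p.1 N = ∑ k ∈ Finset.range N, ((OFwt w k)⁻¹ * p.2 k) • w k} := by
      ext p; simp [Set.mem_iInter]
    rw [this]
    refine isClosed_iInter fun N => ?_
    refine isClosed_eq ?_ ?_
    · exact (continuous_eval_const N).comp continuous_fst
    · refine continuous_finset_sum _ fun k _ => ?_
      exact ((continuous_const.mul ((continuous_eval_const k).comp continuous_snd)).smul
        continuous_const)
  · exact OF_isClosed_conv.preimage continuous_fst
  · exact OF_isClosed_zero.preimage continuous_snd

noncomputable instance OFSeq.instCompleteSpace [CompleteSpace W] (w : ℕ → W) :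
    CompleteSpace (OFSeq w) := by
  have hiso : Isometry (OFJ w) :=
    AddMonoidHomClass.isometry_of_norm (OFJ w) fun z => rfl
  refine (completeSpace_iff_isComplete_range hiso.isUniformInducing).mpr ?_
  rw [OF_range_eq]
  exact (OF_isClosed_S w).isComplete

end OFrameAux2

section OFrameAux3

open BoundedContinuousFunction

variable {W : Type*} [NormedAddCommGroup W] [NormedSpace ℝ W]

/-- The canonical unit vectors. -/
noncomputable def OFvec (w : ℕ → W) (k : ℕ) : OFSeq w where
  c := Pi.single k 1
  conv := by
    refine ⟨w k, Tendsto.congr' ?_ tendsto_const_nhds⟩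
    filter_upwards [eventually_ge_atTop (k+1)] with N hN
    rw [OFPS]
    have : ∀ i ∈ Finset.range N, (Pi.single k 1 : ℕ → ℝ) i • w i
        = if i = k then w i else 0 := by
      intro i _
      rcases eq_or_ne i k with rfl | h
      · simp
      · simp [Pi.single_apply, h]
    rw [Finset.sum_congr rfl this, Finset.sum_ite_eq' (Finset.range N) k (fun i => w i),
      if_pos (Finset.mem_range.mpr (by omega))]
  small := by
    refine Tendsto.congr' ?_ tendsto_const_nhds
    filter_upwards [eventually_ge_atTop (k+1)] with j hj
    have : j ≠ k := by omega
    simp [Pi.single_apply, this]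

/-- Coordinate functionals. -/
noncomputable def OFcoord (w : ℕ → W) (k : ℕ) : OFSeq w →L[ℝ] ℝ :=
  LinearMap.mkContinuous
    { toFun := fun z => z.c k
      map_add' := fun a b => rfl
      map_smul' := fun r a => rfl }
    ((OFwt w k)⁻¹)
    (fun z => by
      have h1 : ‖z.G k‖ ≤ ‖z‖ := (z.G.norm_coe_le_norm k).trans (OFSeq.norm_G_le w z)
      have h2 : OFwt w k * ‖z.c k‖ = ‖z.G k‖ := by
        rw [OFSeq.G_apply, Real.norm_eq_abs, Real.norm_eq_abs, abs_mul,
          abs_of_pos (OFwt_pos w k)]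
      have h3 : OFwt w k * ‖z.c k‖ ≤ ‖z‖ := h2.le.trans (h2 ▸ h1)
      calc ‖z.c k‖ = (OFwt w k)⁻¹ * (OFwt w k * ‖z.c k‖) := by
            rw [inv_mul_cancel_left₀ (OFwt_pos w k).ne']
        _ ≤ (OFwt w k)⁻¹ * ‖z‖ :=
            mul_le_mul_of_nonneg_left h3 (inv_nonneg.mpr (OFwt_pos w k).le))

@[simp] lemma OFcoord_apply (w : ℕ → W) (k : ℕ) (z : OFSeq w) :
    OFcoord w k z = z.c k := rfl

lemma OFSeq.sum_c (w : ℕ → W) (z : OFSeq w) (N : ℕ) :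
    (∑ k ∈ Finset.range N, z.c k • OFvec w k).c
      = fun j => if j < N then z.c j else 0 := by
  have hmap : (∑ k ∈ Finset.range N, z.c k • OFvec w k).c
      = ∑ k ∈ Finset.range N, z.c k • (OFvec w k).c := by
    induction N with
    | zero => simp
    | succ n ih => rw [Finset.sum_range_succ, Finset.sum_range_succ, OFSeq.add_c, ih,
        OFSeq.smul_c]
  rw [hmap]
  funext j
  rw [Finset.sum_apply]
  have : ∀ k ∈ Finset.range N, (z.c k • (OFvec w k).c) j
      = if j = k then z.c k else 0 := by
    intro k _
    rw [Pi.smul_apply, smul_eq_mul]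
    rcases eq_or_ne j k with rfl | h
    · simp [OFvec]
    · simp [OFvec, Pi.single_apply, h]
  rw [Finset.sum_congr rfl this, Finset.sum_ite_eq (Finset.range N) j (fun k => z.c k)]
  simp

lemma OFSeq.expand_aux [CompleteSpace W] (w : ℕ → W) (z : OFSeq w) :
    Tendsto (fun N => ∑ k ∈ Finset.range N, OFcoord w k z • OFvec w k) atTop (𝓝 z) := by
  have hdc : ∀ N, (z - ∑ k ∈ Finset.range N, z.c k • OFvec w k).c
      = fun j => if j < N then 0 else z.c j := by
    intro N
    rw [OFSeq.sub_c, OFSeq.sum_c]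
    funext j
    rcases lt_or_ge j N with h | h
    · simp [h]
    · simp [not_lt.mpr h, not_lt_of_ge h]
  obtain ⟨L, hL⟩ := z.conv
  rw [Metric.tendsto_atTop]
  intro ε hε
  obtain ⟨N₁, hN₁⟩ := Metric.cauchySeq_iff.mp hL.cauchySeq (ε/2) (by linarith)
  obtain ⟨N₂, hN₂⟩ := Metric.tendsto_atTop.mp z.small (ε/2) (by linarith)
  refine ⟨max N₁ N₂, fun N hN => ?_⟩
  have hNN₁ : N₁ ≤ N := le_trans (le_max_left _ _) hN
  have hNN₂ : N₂ ≤ N := le_trans (le_max_right _ _) hN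
  set d : OFSeq w := z - ∑ k ∈ Finset.range N, z.c k • OFvec w k with hd
  have heq : (∑ k ∈ Finset.range N, OFcoord w k z • OFvec w k)
      = ∑ k ∈ Finset.range N, z.c k • OFvec w k := by
    refine Finset.sum_congr rfl fun k _ => ?_
    rw [OFcoord_apply]
  rw [heq]
  have hdist : dist (∑ k ∈ Finset.range N, z.c k • OFvec w k) z = ‖d‖ := by
    rw [dist_eq_norm, ← norm_neg]
    congr 1
    rw [hd]
    abel
  rw [hdist, OFSeq.norm_def]
  have hF : ‖d.F‖ ≤ ε/2 := by
    rw [norm_le (by linarith)]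
    intro M
    rw [OFSeq.F_apply]
    have hval : OFPS w d.c M = OFPS w z.c M - OFPS w z.c (min M N) := by
      rcases le_total M N with h | h
      · rw [min_eq_left h, sub_self, OFPS]
        refine Finset.sum_eq_zero fun k hk => ?_
        have : k < N := lt_of_lt_of_le (Finset.mem_range.mp hk) h
        rw [hd] at *
        rw [show d.c k = if k < N then 0 else z.c k from congrFun (hdc N) k,
          if_pos this, zero_smul]
      · rw [min_eq_right h]
        have hsub : OFPS w z.c M - OFPS w z.c N
            = ∑ k ∈ Finset.Ico N M, z.c k • w k := by
          rw [OFPS, OFPS, eq_comm]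
          exact Finset.sum_Ico_eq_sub _ h
        rw [hsub, OFPS]
        rw [Finset.range_eq_Ico, ← Finset.sum_Ico_consecutive _ (Nat.zero_le N) h]
        have hzero : ∑ k ∈ Finset.Ico 0 N, d.c k • w k = 0 := by
          refine Finset.sum_eq_zero fun k hk => ?_
          have : k < N := (Finset.mem_Ico.mp hk).2
          rw [show d.c k = if k < N then 0 else z.c k from congrFun (hdc N) k,
            if_pos this, zero_smul]
        have hrest : ∑ k ∈ Finset.Ico N M, d.c k • w k
            = ∑ k ∈ Finset.Ico N M, z.c k • w k := by
          refine Finset.sum_congr rfl fun k hk => ?_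
          have : ¬ k < N := not_lt.mpr (Finset.mem_Ico.mp hk).1
          rw [show d.c k = if k < N then 0 else z.c k from congrFun (hdc N) k,
            if_neg this]
        rw [hzero, hrest, zero_add]
    rw [hval]
    rcases le_total M N with h | h
    · rw [min_eq_left h, sub_self, norm_zero]; linarith
    · rw [min_eq_right h]
      have := hN₁ M (le_trans hNN₁ h) N hNN₁
      rw [dist_eq_norm] at this
      linarith
  have hG : ‖d.G‖ ≤ ε/2 := by
    rw [norm_le (by linarith)]
    intro j
    rw [OFSeq.G_apply,
      show d.c j = if j < N then 0 else z.c j from congrFun (hdc N) j]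
    rcases lt_or_ge j N with h | h
    · rw [if_pos h, mul_zero, norm_zero]; linarith
    · rw [if_neg (not_lt.mpr h)]
      have := hN₂ j (le_trans hNN₂ h)
      rw [Real.dist_eq, sub_zero] at this
      rw [Real.norm_eq_abs]
      linarith
  have : ‖d.F‖ ⊔ ‖d.G‖ ≤ ε/2 := sup_le hF hG
  linarith

/-- The Banach space with basis built from a sequence `w`. -/
noncomputable def OFbasis (w : ℕ → W) [CompleteSpace W] : BanachWithBasis :=
  @BanachWithBasis.mk (OFSeq w) _ _ _ (OFvec w) (OFcoord w)
    (by
      intro k j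
      rw [OFcoord_apply]
      show (Pi.single j 1 : ℕ → ℝ) k = _
      rcases eq_or_ne k j with rfl | h
      · simp
      · simp [Pi.single_apply, h])
    (OFSeq.expand_aux w)

end OFrameAux3

section OFrameAux4

open BoundedContinuousFunction

variable {X W : Type*} [NormedAddCommGroup X] [NormedSpace ℝ X]
  [NormedAddCommGroup W] [NormedSpace ℝ W]

lemma OF_term_tendsto (T : X →L[ℝ] W) (x'' : ℕ → X →L[ℝ] ℝ) (w : ℕ → W)
    (hfr : IsOFrame T x'' w) (x : X) :
    Tendsto (fun k => x'' k x • w k) atTop (𝓝 0) := by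
  have h1 := hfr x
  have h2 := (h1.comp (tendsto_add_atTop_nat 1)).sub h1
  rw [sub_self] at h2
  refine h2.congr fun k => ?_
  simp [Function.comp, Finset.sum_range_succ]

lemma OF_hbd (x'' : ℕ → X →L[ℝ] ℝ) (w : ℕ → W) (hz : ∀ k, w k = 0 → x'' k = 0)
    (x : X) (k : ℕ) : ‖OFwt w k * x'' k x‖ ≤ ‖x'' k x • w k‖ := by
  by_cases h : w k = 0
  · simp [hz k h]
  · rw [norm_smul, Real.norm_eq_abs, Real.norm_eq_abs, abs_mul,
      abs_of_pos (OFwt_pos w k), OFwt, OFgam, if_neg h]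
    have h1 : (2:ℝ)⁻¹ ^ k ≤ 1 := pow_le_one₀ (by norm_num) (by norm_num)
    have h2 : (2:ℝ)⁻¹ ^ k * (‖w k‖ * |x'' k x|) ≤ ‖w k‖ * |x'' k x| :=
      mul_le_of_le_one_left (by positivity) h1
    nlinarith [h2]

/-- The coefficient sequence of `x`. -/
noncomputable def OFAseq (T : X →L[ℝ] W) (x'' : ℕ → X →L[ℝ] ℝ) (w : ℕ → W)
    (hfr : IsOFrame T x'' w) (hz : ∀ k, w k = 0 → x'' k = 0) (x : X) : OFSeq w :=
  ⟨fun k => x'' k x, ⟨T x, hfr x⟩,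
    squeeze_zero_norm (OF_hbd x'' w hz x)
      (by simpa using (OF_term_tendsto T x'' w hfr x).norm)⟩

@[simp] lemma OFAseq_c (T : X →L[ℝ] W) (x'' : ℕ → X →L[ℝ] ℝ) (w : ℕ → W)
    (hfr : IsOFrame T x'' w) (hz : ∀ k, w k = 0 → x'' k = 0) (x : X) :
    (OFAseq T x'' w hfr hz x).c = fun k => x'' k x := rfl

/-- The analysis operator as a linear map. -/
noncomputable def OFA (T : X →L[ℝ] W) (x'' : ℕ → X →L[ℝ] ℝ) (w : ℕ → W)
    (hfr : IsOFrame T x'' w) (hz : ∀ k, w k = 0 → x'' k = 0) :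
    X →ₗ[ℝ] OFSeq w where
  toFun := OFAseq T x'' w hfr hz
  map_add' a b := by ext1; funext k; simp
  map_smul' r a := by ext1; funext k; simp

/-- The synthesis limit. -/
noncomputable def OFjfun (w : ℕ → W) (z : OFSeq w) : W :=
  letI : Nonempty W := ⟨0⟩
  limUnder atTop (OFPS w z.c)

lemma OFjfun_tendsto (w : ℕ → W) (z : OFSeq w) :
    Tendsto (OFPS w z.c) atTop (𝓝 (OFjfun w z)) := by
  letI : Nonempty W := ⟨0⟩
  obtain ⟨L, hL⟩ := z.conv
  have h : OFjfun w z = L := hL.limUnder_eq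
  rw [h]; exact hL

/-- The synthesis operator as a linear map. -/
noncomputable def OFj (w : ℕ → W) : OFSeq w →ₗ[ℝ] W where
  toFun := OFjfun w
  map_add' a b :=
    tendsto_nhds_unique (OFjfun_tendsto w (a + b))
      (((OFjfun_tendsto w a).add (OFjfun_tendsto w b)).congr
        fun N => (OFPS_add w a.c b.c N).symm)
  map_smul' r a :=
    tendsto_nhds_unique (OFjfun_tendsto w (r • a))
      (((OFjfun_tendsto w a).const_smul r).congr
        fun N => (OFPS_smul w r a.c N).symm)

lemma OFj_bound (w : ℕ → W) (z : OFSeq w) : ‖OFj w z‖ ≤ 1 * ‖z‖ := by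
  rw [one_mul]
  refine le_of_tendsto' (OFjfun_tendsto w z).norm fun N => ?_
  calc ‖OFPS w z.c N‖ = ‖z.F N‖ := rfl
    _ ≤ ‖z.F‖ := z.F.norm_coe_le_norm N
    _ ≤ ‖z‖ := OFSeq.norm_F_le w z

end OFrameAux4

/-- A bounded operator between Banach spaces admits an O-frame iff it factors
through a Banach space with a Schauder basis. -/
theorem oframe_iff_factors_through_basis {X W : Type*}
    [NormedAddCommGroup X] [NormedSpace ℝ X] [CompleteSpace X]
    [NormedAddCommGroup W] [NormedSpace ℝ W] [CompleteSpace W]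
    (T : X →L[ℝ] W) :
    (∃ (x' : ℕ → (X →L[ℝ] ℝ)) (w : ℕ → W), IsOFrame T x' w) ↔
    (∃ (Z : BanachWithBasis) (A : X →L[ℝ] Z.carrier) (j : Z.carrier →L[ℝ] W),
        T = j.comp A) := by
  constructor
  · rintro ⟨x', w, hfr⟩
    classical
    set x'' : ℕ → X →L[ℝ] ℝ := fun k => if w k = 0 then 0 else x' k with hx''
    have hz : ∀ k, w k = 0 → x'' k = 0 := fun k h => by simp [hx'', h]
    have hfr'' : IsOFrame T x'' w := by
      intro x
      refine (hfr x).congr fun N => Finset.sum_congr rfl fun k _ => ?_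
      by_cases h : w k = 0 <;> simp [hx'', h]
    have hSN : ∀ (N : ℕ) (x : X),
        (∑ k ∈ Finset.range N, (x'' k).smulRight (w k)) x
          = ∑ k ∈ Finset.range N, x'' k x • w k := by
      intro N x
      simp [ContinuousLinearMap.sum_apply]
    have hpt : ∀ x : X, ∃ B, ∀ N : ℕ,
        ‖(∑ k ∈ Finset.range N, (x'' k).smulRight (w k)) x‖ ≤ B := by
      intro x
      obtain ⟨B, hB⟩ := (hfr'' x).norm.bddAbove_range
      exact ⟨B, fun N => by rw [hSN]; exact hB (Set.mem_range_self N)⟩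
    obtain ⟨C, hC⟩ := banach_steinhaus hpt
    have hC0 : 0 ≤ C := le_trans (norm_nonneg _) (hC 0)
    have hAb : ∀ x : X, ‖OFA T x'' w hfr'' hz x‖ ≤ 2*C*‖x‖ := by
      intro x
      have h2C : 0 ≤ 2*C*‖x‖ := by positivity
      have hAx : OFA T x'' w hfr'' hz x = OFAseq T x'' w hfr'' hz x := rfl
      rw [hAx, OFSeq.norm_def]
      refine sup_le ?_ ?_
      · rw [BoundedContinuousFunction.norm_le h2C]
        intro N
        rw [OFSeq.F_apply]
        have he : OFPS w (OFAseq T x'' w hfr'' hz x).c N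
            = (∑ k ∈ Finset.range N, (x'' k).smulRight (w k)) x := (hSN N x).symm
        rw [he]
        calc ‖(∑ k ∈ Finset.range N, (x'' k).smulRight (w k)) x‖
            ≤ ‖∑ k ∈ Finset.range N, (x'' k).smulRight (w k)‖ * ‖x‖ :=
              ContinuousLinearMap.le_opNorm _ x
          _ ≤ C * ‖x‖ := mul_le_mul_of_nonneg_right (hC N) (norm_nonneg x)
          _ ≤ 2*C*‖x‖ := by nlinarith [norm_nonneg x]
      · rw [BoundedContinuousFunction.norm_le h2C]
        intro k
        rw [OFSeq.G_apply]
        have h1 : ‖OFwt w k * (OFAseq T x'' w hfr'' hz x).c k‖ ≤ ‖x'' k x • w k‖ :=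
          OF_hbd x'' w hz x k
        have h2 : x'' k x • w k
            = (∑ i ∈ Finset.range (k+1), (x'' i).smulRight (w i)) x
              - (∑ i ∈ Finset.range k, (x'' i).smulRight (w i)) x := by
          rw [hSN, hSN, Finset.sum_range_succ]; abel
        calc ‖OFwt w k * (OFAseq T x'' w hfr'' hz x).c k‖
            ≤ ‖x'' k x • w k‖ := h1
          _ ≤ ‖(∑ i ∈ Finset.range (k+1), (x'' i).smulRight (w i)) x‖
              + ‖(∑ i ∈ Finset.range k, (x'' i).smulRight (w i)) x‖ := by
              rw [h2]; exact norm_sub_le _ _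
          _ ≤ C * ‖x‖ + C * ‖x‖ :=
              add_le_add
                ((ContinuousLinearMap.le_opNorm _ x).trans
                  (mul_le_mul_of_nonneg_right (hC _) (norm_nonneg x)))
                ((ContinuousLinearMap.le_opNorm _ x).trans
                  (mul_le_mul_of_nonneg_right (hC _) (norm_nonneg x)))
          _ = 2*C*‖x‖ := by ring
    refine ⟨OFbasis w, LinearMap.mkContinuous (OFA T x'' w hfr'' hz) (2*C) hAb,
      LinearMap.mkContinuous (OFj w) 1 (OFj_bound w), ?_⟩
    ext x
    rw [ContinuousLinearMap.comp_apply]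
    have h1 : Tendsto (OFPS w (OFAseq T x'' w hfr'' hz x).c) atTop (𝓝 (T x)) := hfr'' x
    exact tendsto_nhds_unique h1 (OFjfun_tendsto w _)
  · rintro ⟨Z, A, j, rfl⟩
    refine ⟨fun k => (Z.coord k).comp A, fun k => j (Z.vec k), fun x => ?_⟩
    have h2 := (j.continuous.tendsto (A x)).comp (Z.expand (A x))
    rw [ContinuousLinearMap.comp_apply]
    refine h2.congr fun N => ?_
    show j (∑ k ∈ Finset.range N, Z.coord k (A x) • Z.vec k) = _
    rw [map_sum]
    refine Finset.sum_congr rfl fun k _ => ?_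
    rw [ContinuousLinearMap.map_smul]
    rfl
end

section
/- A bounded operator T ∈ L(X,W) admits a UO-frame (unconditional operator frame) if and only if T factors through a Banach space with an unconditional basis. -/
open Filter Topology

namespace UOAux

open UniformSpace

variable {W : Type*} [NormedAddCommGroup W] [NormedSpace ℝ W]

/-- Norm-defining function on finitely supported sequences. -/
noncomputable def preN (w : ℕ → W) (c : ℕ → ℝ) (a : ℕ →₀ ℝ) : ℝ :=
  (⨆ F : Finset ℕ, ‖∑ k ∈ F, a k • w k‖) + ⨆ k, |a k| * c k

variable {w : ℕ → W} {c : ℕ → ℝ}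

lemma bdd1 (a : ℕ → ℝ) (s : Finset ℕ) (hs : ∀ k ∉ s, a k = 0) :
    BddAbove (Set.range fun F : Finset ℕ => ‖∑ k ∈ F, a k • w k‖) := by
  refine ⟨∑ k ∈ s, ‖a k • w k‖, ?_⟩
  rintro - ⟨F, rfl⟩
  dsimp only
  have h1 : ∑ k ∈ F, a k • w k = ∑ k ∈ F ∩ s, a k • w k := by
    refine (Finset.sum_subset Finset.inter_subset_left fun x hx hx' => ?_).symm
    rw [hs x fun hxs => hx' (Finset.mem_inter.2 ⟨hx, hxs⟩), zero_smul]
  rw [h1]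
  exact (norm_sum_le _ _).trans <| Finset.sum_le_sum_of_subset_of_nonneg
    Finset.inter_subset_right (fun _ _ _ => norm_nonneg _)

lemma bdd2 (hc : ∀ k, 0 < c k) (a : ℕ → ℝ) (s : Finset ℕ) (hs : ∀ k ∉ s, a k = 0) :
    BddAbove (Set.range fun k => |a k| * c k) := by
  refine ⟨∑ k ∈ s, |a k| * c k, ?_⟩
  rintro - ⟨k, rfl⟩
  dsimp only
  by_cases hk : k ∈ s
  · exact Finset.single_le_sum (fun i _ => mul_nonneg (abs_nonneg _) (hc i).le) hk
  · rw [hs k hk]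
    simp only [abs_zero, zero_mul]
    exact Finset.sum_nonneg fun i _ => mul_nonneg (abs_nonneg _) (hc i).le

lemma le_preN_fst (hc : ∀ k, 0 < c k) (a : ℕ →₀ ℝ) (F : Finset ℕ) :
    ‖∑ k ∈ F, a k • w k‖ ≤ preN w c a := by
  refine le_add_of_le_of_nonneg (le_ciSup (bdd1 a a.support fun k hk => Finsupp.notMem_support_iff.1 hk) F)
    (Real.iSup_nonneg fun k => mul_nonneg (abs_nonneg _) (hc k).le)

lemma le_preN_snd (hc : ∀ k, 0 < c k) (a : ℕ →₀ ℝ) (k : ℕ) : |a k| * c k ≤ preN w c a :=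
  le_add_of_nonneg_of_le (Real.iSup_nonneg fun _ => norm_nonneg _)
    (le_ciSup (bdd2 hc a a.support fun k hk => Finsupp.notMem_support_iff.1 hk) k)

lemma preN_nonneg (hc : ∀ k, 0 < c k) (a : ℕ →₀ ℝ) : 0 ≤ preN w c a :=
  add_nonneg (Real.iSup_nonneg fun _ => norm_nonneg _)
    (Real.iSup_nonneg fun k => mul_nonneg (abs_nonneg _) (hc k).le)

lemma preN_zero : preN w c 0 = 0 := by
  simp only [preN, Finsupp.coe_zero, Pi.zero_apply, zero_smul, Finset.sum_const_zero,
    norm_zero, abs_zero, zero_mul, ciSup_const, add_zero]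

lemma preN_neg (a : ℕ →₀ ℝ) : preN w c (-a) = preN w c a := by
  simp only [preN, Finsupp.coe_neg, Pi.neg_apply, neg_smul, Finset.sum_neg_distrib,
    norm_neg, abs_neg]

lemma preN_add_le (hc : ∀ k, 0 < c k) (a b : ℕ →₀ ℝ) :
    preN w c (a + b) ≤ preN w c a + preN w c b := by
  have h1 : (⨆ F : Finset ℕ, ‖∑ k ∈ F, (a + b) k • w k‖) ≤
      (⨆ F : Finset ℕ, ‖∑ k ∈ F, a k • w k‖) + ⨆ F : Finset ℕ, ‖∑ k ∈ F, b k • w k‖ := by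
    refine ciSup_le fun F => ?_
    have : ∑ k ∈ F, (a + b) k • w k = (∑ k ∈ F, a k • w k) + ∑ k ∈ F, b k • w k := by
      rw [← Finset.sum_add_distrib]
      exact Finset.sum_congr rfl fun k _ => by
        simp [Finsupp.add_apply, add_smul]
    rw [this]
    exact (norm_add_le _ _).trans (add_le_add
      (le_ciSup (bdd1 a a.support fun k hk => Finsupp.notMem_support_iff.1 hk) F)
      (le_ciSup (bdd1 b b.support fun k hk => Finsupp.notMem_support_iff.1 hk) F))
  have h2 : (⨆ k, |(a + b) k| * c k) ≤ (⨆ k, |a k| * c k) + ⨆ k, |b k| * c k := by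
    refine ciSup_le fun k => ?_
    have : |(a + b) k| * c k ≤ |a k| * c k + |b k| * c k := by
      rw [← add_mul]
      exact mul_le_mul_of_nonneg_right (by simpa [Finsupp.add_apply] using abs_add_le (a k) (b k))
        (hc k).le
    exact this.trans (add_le_add
      (le_ciSup (bdd2 hc a a.support fun k hk => Finsupp.notMem_support_iff.1 hk) k)
      (le_ciSup (bdd2 hc b b.support fun k hk => Finsupp.notMem_support_iff.1 hk) k))
  calc preN w c (a + b) ≤ _ := add_le_add h1 h2
  _ = preN w c a + preN w c b := by rw [preN, preN]; ring

lemma preN_smul_le (hc : ∀ k, 0 < c k) (r : ℝ) (a : ℕ →₀ ℝ) :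
    preN w c (r • a) ≤ |r| * preN w c a := by
  have h1 : (⨆ F : Finset ℕ, ‖∑ k ∈ F, (r • a) k • w k‖) ≤
      |r| * ⨆ F : Finset ℕ, ‖∑ k ∈ F, a k • w k‖ := by
    refine ciSup_le fun F => ?_
    have : ∑ k ∈ F, (r • a) k • w k = r • ∑ k ∈ F, a k • w k := by
      rw [Finset.smul_sum]
      exact Finset.sum_congr rfl fun k _ => by
        simp [Finsupp.smul_apply, smul_smul]
    have hn : ‖r • ∑ k ∈ F, a k • w k‖ = |r| * ‖∑ k ∈ F, a k • w k‖ := by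
      rw [norm_smul, Real.norm_eq_abs]
    rw [this, hn]
    exact mul_le_mul_of_nonneg_left
      (le_ciSup (bdd1 a a.support fun k hk => Finsupp.notMem_support_iff.1 hk) F) (abs_nonneg r)
  have h2 : (⨆ k, |(r • a) k| * c k) ≤ |r| * ⨆ k, |a k| * c k := by
    refine ciSup_le fun k => ?_
    have : |(r • a) k| * c k = |r| * (|a k| * c k) := by
      simp [Finsupp.smul_apply, abs_mul, mul_assoc]
    rw [this]
    exact mul_le_mul_of_nonneg_left
      (le_ciSup (bdd2 hc a a.support fun k hk => Finsupp.notMem_support_iff.1 hk) k) (abs_nonneg r)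
  calc preN w c (r • a) ≤ _ := add_le_add h1 h2
  _ = |r| * preN w c a := by rw [preN, mul_add]

lemma preN_eq_zero (hc : ∀ k, 0 < c k) {a : ℕ →₀ ℝ} (h : preN w c a = 0) : a = 0 := by
  ext k
  have := le_preN_snd (w := w) hc a k
  rw [h] at this
  have h2 : |a k| * c k = 0 :=
    le_antisymm this (mul_nonneg (abs_nonneg _) (hc k).le)
  rcases mul_eq_zero.1 h2 with h3 | h3
  · simpa using abs_eq_zero.1 h3
  · exact absurd h3 (hc k).ne'

/-- Type synonym for `ℕ →₀ ℝ` carrying the norm built from `w` and `c`. -/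
def Z0 (w : ℕ → W) (c : ℕ → ℝ) (_hc : ∀ k, 0 < c k) : Type := ℕ →₀ ℝ

variable {hc : ∀ k, 0 < c k}

noncomputable instance : AddCommGroup (Z0 w c hc) := inferInstanceAs (AddCommGroup (ℕ →₀ ℝ))
noncomputable instance : Module ℝ (Z0 w c hc) := inferInstanceAs (Module ℝ (ℕ →₀ ℝ))

/-- Interpret an element of `Z0` as a finsupp. -/
def Z0.toF (a : Z0 w c hc) : ℕ →₀ ℝ := a
/-- Interpret a finsupp as an element of `Z0`. -/
def Z0.ofF (a : ℕ →₀ ℝ) : Z0 w c hc := a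

noncomputable instance : NormedAddCommGroup (Z0 w c hc) :=
  AddGroupNorm.toNormedAddCommGroup
  { toFun := fun a => preN w c a.toF
    map_zero' := preN_zero
    add_le' := fun a b => preN_add_le hc a.toF b.toF
    neg' := fun a => preN_neg a.toF
    eq_zero_of_map_eq_zero' := fun a h => preN_eq_zero hc h }

lemma Z0.norm_def (a : Z0 w c hc) : ‖a‖ = preN w c a.toF := rfl

noncomputable instance : NormedSpace ℝ (Z0 w c hc) where
  norm_smul_le r a := by
    rw [Z0.norm_def, Z0.norm_def]
    rw [Real.norm_eq_abs]; exact preN_smul_le hc r a.toF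

/-- `toF` as a linear map. -/
def Z0.toFL : Z0 w c hc →ₗ[ℝ] (ℕ →₀ ℝ) where
  toFun := Z0.toF
  map_add' := fun _ _ => rfl
  map_smul' := fun _ _ => rfl

lemma Z0.toF_sum {ι : Type*} (s : Finset ι) (g : ι → Z0 w c hc) :
    (∑ i ∈ s, g i).toF = ∑ i ∈ s, (g i).toF :=
  map_sum (Z0.toFL (hc := hc)) g s

lemma Z0.norm_ofF (b : ℕ →₀ ℝ) : ‖(Z0.ofF b : Z0 w c hc)‖ = preN w c b := rfl

/-- The `k`-th basis vector of `Z0`. -/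
noncomputable def eV (k : ℕ) : Z0 w c hc := Z0.ofF (Finsupp.single k 1)

lemma toF_smul_eV (r : ℝ) (k : ℕ) : ((r • eV k : Z0 w c hc)).toF = Finsupp.single k r := by
  show r • Finsupp.single k (1:ℝ) = Finsupp.single k r
  rw [Finsupp.smul_single, smul_eq_mul, mul_one]

/-- The `k`-th coordinate functional on `Z0`. -/
noncomputable def coord0 (k : ℕ) : Z0 w c hc →L[ℝ] ℝ :=
  LinearMap.mkContinuous ((Finsupp.lapply k).comp Z0.toFL) (c k)⁻¹ (by
    intro a
    have h : |a.toF k| * c k ≤ preN w c a.toF := le_preN_snd (w := w) hc a.toF k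
    have h2 : |a.toF k| ≤ (c k)⁻¹ * preN w c a.toF := by
      rw [← div_eq_inv_mul]
      exact (le_div_iff₀ (hc k)).2 h
    exact h2)

lemma coord0_apply (k : ℕ) (a : Z0 w c hc) : coord0 k a = a.toF k := rfl

/-- The summation map `Z0 → W`. -/
noncomputable def j0 : Z0 w c hc →L[ℝ] W :=
  LinearMap.mkContinuous
    ((Finsupp.lsum ℝ fun k => LinearMap.toSpanSingleton ℝ W (w k)).comp Z0.toFL) 1 (by
    intro a
    have h1 : ((Finsupp.lsum ℝ fun k => LinearMap.toSpanSingleton ℝ W (w k)).comp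
        (Z0.toFL (hc := hc))) a = ∑ k ∈ a.toF.support, a.toF k • w k := by
      simp [Finsupp.lsum_apply, Finsupp.sum, LinearMap.toSpanSingleton_apply, Z0.toFL]
      rfl
    rw [h1, one_mul, Z0.norm_def]
    exact le_preN_fst hc a.toF a.toF.support)

lemma j0_apply (a : Z0 w c hc) : j0 a = ∑ k ∈ a.toF.support, a.toF k • w k := by
  show ((Finsupp.lsum ℝ fun k => LinearMap.toSpanSingleton ℝ W (w k)).comp
      (Z0.toFL (hc := hc))) a = _
  simp [Finsupp.lsum_apply, Finsupp.sum, LinearMap.toSpanSingleton_apply, Z0.toFL]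
  rfl

lemma j0_eV (k : ℕ) : (j0 : Z0 w c hc →L[ℝ] W) (eV k) = w k := by
  rw [j0_apply]
  have h : (eV k : Z0 w c hc).toF = Finsupp.single k 1 := rfl
  rw [h, Finsupp.support_single_ne_zero k one_ne_zero]
  simp

/-- Restriction of a sequence to a finite set, as a finsupp. -/
noncomputable def rF (F : Finset ℕ) (f : ℕ → ℝ) : ℕ →₀ ℝ :=
  ∑ k ∈ F, Finsupp.single k (f k)

lemma rF_apply (F : Finset ℕ) (f : ℕ → ℝ) (j : ℕ) :
    rF F f j = if j ∈ F then f j else 0 := by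
  classical
  rw [rF, Finset.sum_apply']
  simp [Finsupp.single_apply]

lemma sum_rF_smul (F G : Finset ℕ) (f : ℕ → ℝ) :
    ∑ j ∈ G, rF F f j • w j = ∑ j ∈ G ∩ F, f j • w j := by
  have h1 : ∑ j ∈ G ∩ F, rF F f j • w j = ∑ j ∈ G, rF F f j • w j :=
    Finset.sum_subset Finset.inter_subset_left (fun x hx hx' => by
      have : x ∉ F := fun hF => hx' (Finset.mem_inter.2 ⟨hx, hF⟩)
      rw [rF_apply, if_neg this, zero_smul])
  rw [← h1]
  exact Finset.sum_congr rfl fun j hj => by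
    rw [rF_apply, if_pos (Finset.mem_inter.1 hj).2]

lemma preN_rF_le (hc : ∀ k, 0 < c k) (a : ℕ →₀ ℝ) (F : Finset ℕ) :
    preN w c (rF F a) ≤ preN w c a := by
  refine add_le_add (ciSup_le fun G => ?_) (ciSup_le fun k => ?_)
  · rw [sum_rF_smul]
    exact le_ciSup (bdd1 a a.support fun k hk => Finsupp.notMem_support_iff.1 hk) (G ∩ F)
  · rw [rF_apply]
    by_cases hk : k ∈ F
    · rw [if_pos hk]
      exact le_ciSup (bdd2 hc a a.support fun j hj => Finsupp.notMem_support_iff.1 hj) k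
    · rw [if_neg hk]
      simp only [abs_zero, zero_mul]
      exact Real.iSup_nonneg fun j => mul_nonneg (abs_nonneg _) (hc j).le

lemma rF_eq_self (F : Finset ℕ) (a : ℕ →₀ ℝ) (h : a.support ⊆ F) : rF F a = a := by
  ext j
  rw [rF_apply]
  by_cases hj : j ∈ F
  · rw [if_pos hj]
  · rw [if_neg hj]
    exact (Finsupp.notMem_support_iff.1 fun hs => hj (h hs)).symm

lemma sum_smul_eV (f : ℕ → ℝ) (F : Finset ℕ) :
    (∑ k ∈ F, f k • eV k : Z0 w c hc) = Z0.ofF (rF F f) := by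
  have h : (∑ k ∈ F, f k • eV k : Z0 w c hc).toF = rF F f := by
    rw [Z0.toF_sum]
    exact Finset.sum_congr rfl fun k _ => toF_smul_eV (f k) k
  exact congrArg (Z0.ofF) h

variable (w c) in
/-- The completion of `Z0`: the Banach space with unconditional basis. -/
noncomputable abbrev Zc (hc : ∀ k, 0 < c k) : Type := Completion (Z0 w c hc)

lemma dense_coe : DenseRange ⇑(Completion.toComplL : Z0 w c hc →L[ℝ] Zc w c hc) := by
  rw [Completion.coe_toComplL]
  exact Completion.denseRange_coe

lemma ui_coe : IsUniformInducing ⇑(Completion.toComplL : Z0 w c hc →L[ℝ] Zc w c hc) := by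
  rw [Completion.coe_toComplL]
  exact (Completion.isUniformEmbedding_coe _).isUniformInducing

/-- Coordinate functionals on the completion. -/
noncomputable def coordC (k : ℕ) : Zc w c hc →L[ℝ] ℝ :=
  (coord0 k).extend Completion.toComplL

lemma coordC_coe (k : ℕ) (a : Z0 w c hc) :
    coordC (hc := hc) k (a : Zc w c hc) = a.toF k := by
  have h := ContinuousLinearMap.extend_eq (coord0 k)
    (e := (Completion.toComplL : Z0 w c hc →L[ℝ] Zc w c hc)) dense_coe ui_coe a
  rwa [show (Completion.toComplL : Z0 w c hc →L[ℝ] Zc w c hc) a = (a : Zc w c hc) from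
    congrFun Completion.coe_toComplL a] at h

lemma coe_sum' {ι : Type*} (s : Finset ι) (g : ι → Z0 w c hc) :
    ((∑ i ∈ s, g i : Z0 w c hc) : Zc w c hc) = ∑ i ∈ s, ((g i : Z0 w c hc) : Zc w c hc) :=
  map_sum (Completion.toComplL : Z0 w c hc →L[ℝ] Zc w c hc) g s

variable [CompleteSpace W]

/-- The summation operator on the completion. -/
noncomputable def jC : Zc w c hc →L[ℝ] W :=
  (j0 (hc := hc)).extend Completion.toComplL

lemma jC_coe (a : Z0 w c hc) : jC (hc := hc) (a : Zc w c hc) = j0 (hc := hc) a := by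
  have h := ContinuousLinearMap.extend_eq (j0 (hc := hc))
    (e := (Completion.toComplL : Z0 w c hc →L[ℝ] Zc w c hc)) dense_coe ui_coe a
  exact h

lemma norm_coe_Z0 (a : Z0 w c hc) : ‖(a : Zc w c hc)‖ = ‖a‖ :=
  Completion.norm_coe a

/-- Partial-sum operators on the completion. -/
noncomputable def PF (F : Finset ℕ) : Zc w c hc →L[ℝ] Zc w c hc :=
  ∑ k ∈ F, (coordC (hc := hc) k).smulRight ((eV k : Z0 w c hc) : Zc w c hc)

lemma PF_apply (F : Finset ℕ) (z : Zc w c hc) :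
    PF (hc := hc) F z = ∑ k ∈ F, coordC (hc := hc) k z • ((eV k : Z0 w c hc) : Zc w c hc) := by
  simp [PF, ContinuousLinearMap.sum_apply]

lemma PF_coe (F : Finset ℕ) (a : Z0 w c hc) :
    PF (hc := hc) F (a : Zc w c hc) = ((Z0.ofF (rF F a.toF) : Z0 w c hc) : Zc w c hc) := by
  rw [PF_apply]
  have h1 : ∀ k ∈ F, coordC (hc := hc) k (a : Zc w c hc) • ((eV k : Z0 w c hc) : Zc w c hc)
      = ((a.toF k • eV k : Z0 w c hc) : Zc w c hc) := by
    intro k _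
    rw [coordC_coe, ← Completion.coe_smul]
  rw [Finset.sum_congr rfl h1, ← coe_sum', sum_smul_eV]

lemma norm_PF_le (F : Finset ℕ) (z : Zc w c hc) : ‖PF (hc := hc) F z‖ ≤ ‖z‖ := by
  have hcl : IsClosed {z : Zc w c hc | ‖PF (hc := hc) F z‖ ≤ ‖z‖} :=
    isClosed_le (continuous_norm.comp (PF F).continuous) continuous_norm
  have hsub : Set.range ((↑) : Z0 w c hc → Zc w c hc) ⊆ {z | ‖PF (hc := hc) F z‖ ≤ ‖z‖} := by
    rintro - ⟨a, rfl⟩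
    simp only [Set.mem_setOf_eq]
    rw [PF_coe, norm_coe_Z0, norm_coe_Z0, Z0.norm_def, Z0.norm_def]
    exact preN_rF_le hc a.toF F
  have hdense : closure (Set.range ((↑) : Z0 w c hc → Zc w c hc)) = Set.univ :=
    Completion.denseRange_coe.closure_range
  have : (Set.univ : Set (Zc w c hc)) ⊆ {z | ‖PF (hc := hc) F z‖ ≤ ‖z‖} := by
    rw [← hdense]
    exact hcl.closure_subset_iff.2 hsub
  exact this (Set.mem_univ z)

lemma tendsto_PF (z : Zc w c hc) :
    Tendsto (fun F => PF (hc := hc) F z) atTop (𝓝 z) := by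
  rw [Metric.tendsto_nhds]
  intro ε hε
  obtain ⟨a, ha⟩ := (Completion.denseRange_coe (α := Z0 w c hc)).exists_dist_lt z (half_pos hε)
  filter_upwards [eventually_ge_atTop a.toF.support] with F hF
  have h1 : PF (hc := hc) F (a : Zc w c hc) = (a : Zc w c hc) := by
    rw [PF_coe, rF_eq_self F a.toF hF]
    rfl
  have h2 : dist (PF (hc := hc) F z) (PF (hc := hc) F (a : Zc w c hc)) ≤ dist z (a : Zc w c hc) := by
    rw [dist_eq_norm, dist_eq_norm, ← map_sub]
    exact norm_PF_le F _
  calc dist (PF (hc := hc) F z) z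
      ≤ dist (PF (hc := hc) F z) (PF (hc := hc) F (a : Zc w c hc))
        + dist (PF (hc := hc) F (a : Zc w c hc)) z := dist_triangle _ _ _
    _ = dist (PF (hc := hc) F z) (PF (hc := hc) F (a : Zc w c hc)) + dist (a : Zc w c hc) z := by
        rw [h1]
    _ ≤ dist z (a : Zc w c hc) + dist (a : Zc w c hc) z := add_le_add_left h2 _
    _ < ε / 2 + ε / 2 := by
        rw [dist_comm (a : Zc w c hc) z]
        exact add_lt_add ha ha
    _ = ε := add_halves ε

lemma expand_Zc (z : Zc w c hc) :
    HasSum (fun k => coordC (hc := hc) k z • ((eV k : Z0 w c hc) : Zc w c hc)) z := by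
  have h : (fun F : Finset ℕ => ∑ k ∈ F, coordC (hc := hc) k z • ((eV k : Z0 w c hc) : Zc w c hc))
      = fun F => PF (hc := hc) F z := funext fun F => (PF_apply F z).symm
  show Tendsto _ atTop (𝓝 z)
  rw [h]
  exact tendsto_PF z

lemma biorth_Zc (k j : ℕ) :
    coordC (hc := hc) k ((eV j : Z0 w c hc) : Zc w c hc) = if k = j then 1 else 0 := by
  rw [coordC_coe]
  show Finsupp.single j (1:ℝ) k = _
  rw [Finsupp.single_apply]
  simp [eq_comm]

/-- For any real sequence, the finite partial sums of `f k • e k` in the completion. -/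
lemma coe_sum_smul_eV (f : ℕ → ℝ) (F : Finset ℕ) :
    ∑ k ∈ F, f k • ((eV k : Z0 w c hc) : Zc w c hc)
      = ((Z0.ofF (rF F f) : Z0 w c hc) : Zc w c hc) := by
  rw [← sum_smul_eV, coe_sum']
  exact Finset.sum_congr rfl fun k _ => (Completion.coe_smul _ _).symm

lemma norm_coe_ofF (b : ℕ →₀ ℝ) :
    ‖((Z0.ofF b : Z0 w c hc) : Zc w c hc)‖ = preN w c b := by
  rw [norm_coe_Z0, Z0.norm_ofF]

section Frame

variable {X : Type*} [NormedAddCommGroup X] [NormedSpace ℝ X]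

/-- The weights used in the norm of `Z0`. -/
noncomputable def cw (x' : ℕ → X →L[ℝ] ℝ) : ℕ → ℝ :=
  fun k => (2:ℝ)⁻¹ ^ k / (1 + ‖x' k‖)

lemma cw_pos (x' : ℕ → X →L[ℝ] ℝ) : ∀ k, 0 < cw x' k := fun k =>
  div_pos (pow_pos (by norm_num) k) (by positivity)

lemma abs_mul_cw_le (x' : ℕ → X →L[ℝ] ℝ) (x : X) (k : ℕ) :
    |x' k x| * cw x' k ≤ ‖x‖ * (2:ℝ)⁻¹ ^ k := by
  have h1 : |x' k x| ≤ (1 + ‖x' k‖) * ‖x‖ := by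
    have := (x' k).le_opNorm x
    rw [Real.norm_eq_abs] at this
    nlinarith [norm_nonneg x, norm_nonneg (x' k)]
  have hd : (0:ℝ) < 1 + ‖x' k‖ := by positivity
  have hp : (0:ℝ) ≤ (2:ℝ)⁻¹ ^ k := by positivity
  calc |x' k x| * cw x' k = |x' k x| / (1 + ‖x' k‖) * (2:ℝ)⁻¹ ^ k := by rw [cw]; ring
  _ ≤ ‖x‖ * (2:ℝ)⁻¹ ^ k := by
      refine mul_le_mul_of_nonneg_right ((div_le_iff₀ hd).2 ?_) hp
      calc |x' k x| ≤ (1 + ‖x' k‖) * ‖x‖ := h1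
      _ = ‖x‖ * (1 + ‖x' k‖) := by ring

lemma abs_mul_cw_le' (x' : ℕ → X →L[ℝ] ℝ) (x : X) (k : ℕ) :
    |x' k x| * cw x' k ≤ ‖x‖ := by
  refine (abs_mul_cw_le x' x k).trans ?_
  have : (2:ℝ)⁻¹ ^ k ≤ 1 := pow_le_one₀ (by norm_num) (by norm_num)
  nlinarith [norm_nonneg x]

variable {x' : ℕ → X →L[ℝ] ℝ}

lemma preN_rFx_bound (x : X) (hx : Summable fun k => x' k x • w k) :
    ∃ C, ∀ F : Finset ℕ, preN w (cw x') (rF F fun k => x' k x) ≤ C := by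
  classical
  obtain ⟨s, hs⟩ := cauchySeq_finset_iff_sum_vanishing.1 hx.hasSum.cauchySeq
    (Metric.closedBall 0 1) (Metric.closedBall_mem_nhds 0 one_pos)
  refine ⟨(∑ k ∈ s, ‖x' k x • w k‖ + 1) + ‖x‖, fun F => ?_⟩
  refine add_le_add (ciSup_le fun G => ?_) (ciSup_le fun j => ?_)
  · rw [sum_rF_smul]
    have hsplit : ∑ j ∈ G ∩ F, x' j x • w j
        = (∑ j ∈ (G ∩ F) ∩ s, x' j x • w j) + ∑ j ∈ (G ∩ F) \ s, x' j x • w j :=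
      (Finset.sum_inter_add_sum_sdiff _ _ _).symm
    rw [hsplit]
    refine (norm_add_le _ _).trans (add_le_add ?_ ?_)
    · exact (norm_sum_le _ _).trans (Finset.sum_le_sum_of_subset_of_nonneg
        Finset.inter_subset_right fun _ _ _ => norm_nonneg _)
    · have := hs ((G ∩ F) \ s) Finset.sdiff_disjoint
      rwa [mem_closedBall_zero_iff] at this
  · rw [rF_apply]
    by_cases hj : j ∈ F
    · rw [if_pos hj]; exact abs_mul_cw_le' x' x j
    · rw [if_neg hj]; simpa using norm_nonneg x

lemma preN_rFx_vanish (x : X) (hx : Summable fun k => x' k x • w k) :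
    ∀ ε > 0, ∃ s : Finset ℕ, ∀ F, Disjoint F s →
      preN w (cw x') (rF F fun k => x' k x) < ε := by
  classical
  intro ε hε
  obtain ⟨s₁, hs₁⟩ := cauchySeq_finset_iff_sum_vanishing.1 hx.hasSum.cauchySeq
    (Metric.closedBall 0 (ε/3)) (Metric.closedBall_mem_nhds 0 (by positivity))
  obtain ⟨K, hK⟩ : ∃ K : ℕ, ‖x‖ * (2:ℝ)⁻¹ ^ K < ε / 3 := by
    have h2 : Tendsto (fun n : ℕ => ‖x‖ * (2:ℝ)⁻¹ ^ n) atTop (𝓝 (‖x‖ * 0)) :=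
      tendsto_const_nhds.mul (tendsto_pow_atTop_nhds_zero_of_lt_one (by norm_num) (by norm_num))
    rw [mul_zero] at h2
    exact (h2.eventually_lt_const (by positivity)).exists
  refine ⟨s₁ ∪ Finset.range K, fun F hF => ?_⟩
  rw [Finset.disjoint_union_right] at hF
  have hFK : ∀ j ∈ F, K ≤ j := by
    intro j hj
    by_contra h
    push_neg at h
    exact (Finset.disjoint_left.1 hF.2) hj (Finset.mem_range.2 h)
  have e1 : (⨆ G : Finset ℕ, ‖∑ j ∈ G, rF F (fun k => x' k x) j • w j‖) ≤ ε/3 :=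
    ciSup_le fun G => by
      rw [sum_rF_smul]
      have := hs₁ (G ∩ F) (hF.1.mono_left Finset.inter_subset_right)
      rwa [mem_closedBall_zero_iff] at this
  have e2 : (⨆ j, |rF F (fun k => x' k x) j| * cw x' j) ≤ ε/3 := by
    refine ciSup_le fun j => ?_
    rw [rF_apply]
    by_cases hj : j ∈ F
    · rw [if_pos hj]
      refine ((abs_mul_cw_le x' x j).trans ?_).trans hK.le
      exact mul_le_mul_of_nonneg_left
        (pow_le_pow_of_le_one (by norm_num) (by norm_num) (hFK j hj)) (norm_nonneg x)
    · rw [if_neg hj]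
      simp only [abs_zero, zero_mul]
      positivity
  calc preN w (cw x') (rF F fun k => x' k x) ≤ ε/3 + ε/3 := add_le_add e1 e2
  _ < ε := by linarith

lemma summable_AZ (x : X) (hx : Summable fun k => x' k x • w k) :
    Summable (fun k => x' k x •
      ((eV k : Z0 w (cw x') (cw_pos x')) : Zc w (cw x') (cw_pos x'))) := by
  rw [summable_iff_cauchySeq_finset]
  apply cauchySeq_finset_iff_sum_vanishing.2
  intro e he
  obtain ⟨ε, hε, hball⟩ := Metric.mem_nhds_iff.1 he
  obtain ⟨s, hs⟩ := preN_rFx_vanish x hx ε hε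
  refine ⟨s, fun t ht => hball ?_⟩
  rw [coe_sum_smul_eV, mem_ball_zero_iff, norm_coe_ofF]
  exact hs t ht

variable (x') in
/-- Partial sum operators `X → Zc`. -/
noncomputable def SF (F : Finset ℕ) : X →L[ℝ] Zc w (cw x') (cw_pos x') :=
  ∑ k ∈ F, (x' k).smulRight ((eV k : Z0 w (cw x') (cw_pos x')) : Zc w (cw x') (cw_pos x'))

lemma SF_apply (F : Finset ℕ) (x : X) :
    SF (w := w) x' F x = ∑ k ∈ F, x' k x •
      ((eV k : Z0 w (cw x') (cw_pos x')) : Zc w (cw x') (cw_pos x')) := by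
  simp [SF, ContinuousLinearMap.sum_apply]

lemma norm_SF_apply (F : Finset ℕ) (x : X) :
    ‖SF (w := w) x' F x‖ = preN w (cw x') (rF F fun k => x' k x) := by
  rw [SF_apply, coe_sum_smul_eV, norm_coe_ofF]

lemma exists_A [CompleteSpace X] (hT : ∀ x, Summable fun k => x' k x • w k) :
    ∃ A : X →L[ℝ] Zc w (cw x') (cw_pos x'), ∀ x,
      HasSum (fun k => x' k x •
        ((eV k : Z0 w (cw x') (cw_pos x')) : Zc w (cw x') (cw_pos x'))) (A x) := by
  classical
  have hsum : ∀ x : X, Summable (fun k => x' k x •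
      ((eV k : Z0 w (cw x') (cw_pos x')) : Zc w (cw x') (cw_pos x'))) :=
    fun x => summable_AZ x (hT x)
  obtain ⟨C', hC'⟩ := banach_steinhaus (g := fun F : Finset ℕ => SF (w := w) x' F)
    (fun x => by
      obtain ⟨C, hC⟩ := preN_rFx_bound x (hT x)
      exact ⟨C, fun F => by rw [norm_SF_apply]; exact hC F⟩)
  set v : X → ℕ → Zc w (cw x') (cw_pos x') := fun x k => x' k x •
    ((eV k : Z0 w (cw x') (cw_pos x')) : Zc w (cw x') (cw_pos x')) with hv
  have hAlin_bound : ∀ x : X, ‖∑' k, v x k‖ ≤ C' * ‖x‖ := by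
    intro x
    have ht : Tendsto (fun F : Finset ℕ => SF (w := w) x' F x) atTop (𝓝 (∑' k, v x k)) := by
      have h0 := (hsum x).hasSum
      have heq : (fun F : Finset ℕ => ∑ k ∈ F, v x k)
          = fun F : Finset ℕ => SF (w := w) x' F x := funext fun F => (SF_apply F x).symm
      rw [← heq]
      exact h0
    refine le_of_tendsto ht.norm (Filter.Eventually.of_forall fun F => ?_)
    exact ((SF (w := w) x' F).le_opNorm x).trans
      (mul_le_mul_of_nonneg_right (hC' F) (norm_nonneg x))
  refine ⟨LinearMap.mkContinuous
    { toFun := fun x => ∑' k, v x k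
      map_add' := ?_
      map_smul' := ?_ } C' hAlin_bound, fun x => (hsum x).hasSum⟩
  · intro x y
    have h : HasSum (v (x + y)) ((∑' k, v x k) + ∑' k, v y k) := by
      have h2 := (hsum x).hasSum.add (hsum y).hasSum
      have heq : v (x + y) = fun k => v x k + v y k := by
        funext k
        simp only [hv, map_add, add_smul]
      rw [heq]
      exact h2
    exact h.tsum_eq
  · intro r x
    have h : HasSum (v (r • x)) (r • ∑' k, v x k) := by
      have h2 := (hsum x).hasSum.const_smul r
      have heq : v (r • x) = fun k => r • v x k := by
        funext k
        simp only [hv, map_smul, smul_eq_mul, mul_smul]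
      rw [heq]
      exact h2
    exact h.tsum_eq

end Frame

end UOAux

/-- UO-frame (unconditional operator frame): for every `x`, the series
`∑ ⟨x'_k, x⟩ w_k` converges unconditionally (i.e. is summable) to `T x`. -/
def IsUOFrame {X W : Type*} [NormedAddCommGroup X] [NormedSpace ℝ X]
    [NormedAddCommGroup W] [NormedSpace ℝ W]
    (T : X →L[ℝ] W) (x' : ℕ → (X →L[ℝ] ℝ)) (w : ℕ → W) : Prop :=
  ∀ x : X, HasSum (fun k => x' k x • w k) (T x)

/-- A Banach space together with an unconditional basis. -/
structure BanachWithUnconditionalBasis where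
  carrier : Type
  [grp : NormedAddCommGroup carrier]
  [mod : NormedSpace ℝ carrier]
  [compl : CompleteSpace carrier]
  vec : ℕ → carrier
  coord : ℕ → carrier →L[ℝ] ℝ
  biorth : ∀ k j, coord k (vec j) = if k = j then 1 else 0
  expand : ∀ z : carrier, HasSum (fun k => coord k z • vec k) z

attribute [instance] BanachWithUnconditionalBasis.grp BanachWithUnconditionalBasis.mod
  BanachWithUnconditionalBasis.compl

/-- A bounded operator admits a UO-frame iff it factors through a Banach space
with an unconditional basis. -/
theorem uoframe_iff_factors_through_unconditional_basis {X W : Type*}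
    [NormedAddCommGroup X] [NormedSpace ℝ X] [CompleteSpace X]
    [NormedAddCommGroup W] [NormedSpace ℝ W] [CompleteSpace W]
    (T : X →L[ℝ] W) :
    (∃ (x' : ℕ → (X →L[ℝ] ℝ)) (w : ℕ → W), IsUOFrame T x' w) ↔
    (∃ (Z : BanachWithUnconditionalBasis) (A : X →L[ℝ] Z.carrier)
        (j : Z.carrier →L[ℝ] W), T = j.comp A) := by
  constructor
  · rintro ⟨x', w, hT⟩
    obtain ⟨A, hA⟩ := UOAux.exists_A (w := w) (x' := x') (fun x => (hT x).summable)
    refine ⟨{ carrier := UOAux.Zc w (UOAux.cw x') (UOAux.cw_pos x'),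
              vec := fun k => ((UOAux.eV k : UOAux.Z0 w (UOAux.cw x') (UOAux.cw_pos x')) :
                UOAux.Zc w (UOAux.cw x') (UOAux.cw_pos x')),
              coord := fun k => UOAux.coordC (hc := UOAux.cw_pos x') k,
              biorth := fun k j => UOAux.biorth_Zc k j,
              expand := fun z => UOAux.expand_Zc z }, A,
      UOAux.jC (hc := UOAux.cw_pos x'), ?_⟩
    ext x
    have h2 := (hA x).mapL (UOAux.jC (hc := UOAux.cw_pos x'))
    have h3 : (fun k => UOAux.jC (hc := UOAux.cw_pos x')
          (x' k x • ((UOAux.eV k : UOAux.Z0 w (UOAux.cw x') (UOAux.cw_pos x')) :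
            UOAux.Zc w (UOAux.cw x') (UOAux.cw_pos x'))))
        = fun k => x' k x • w k := by
      funext k
      rw [map_smul, UOAux.jC_coe, UOAux.j0_eV]
    rw [h3] at h2
    exact (hT x).unique h2
  · rintro ⟨Z, A, j, rfl⟩
    refine ⟨fun k => (Z.coord k).comp A, fun k => j (Z.vec k), fun x => ?_⟩
    have h := (Z.expand (A x)).mapL j
    simpa [map_smul] using h
end

section
/- Let A : E → E be the identity on a finite-dimensional normed space E of dimension m ≥ 1. Then there exist rank-one operators B_1,…,B_m : E → E with ‖B_j‖ = 1 for each j and ∑_{j=1}^m B_j = id_E; moreover, setting C_i := (1/m) B_j for i = r m + j (r = 0,…,m−1, j = 1,…,m), one has ∑_{i=1}^{m²} C_i = id_E and ‖∑_{i=1}^q C_i‖ ≤ 2 for every 1 ≤ q ≤ m². -/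
open Finset

/-- Sums of `f (i % m)` over `range q` decompose into full periods plus a remainder. -/
theorem sum_range_mod {M : Type*} [AddCommMonoid M] (f : ℕ → M) (m : ℕ) (hm : 0 < m) (q : ℕ) :
    ∑ i ∈ Finset.range q, f (i % m) =
      (q / m) • (∑ j ∈ Finset.range m, f j) + ∑ j ∈ Finset.range (q % m), f j := by
  have hmul : ∀ r : ℕ, ∑ i ∈ Finset.range (m * r), f (i % m)
      = r • (∑ j ∈ Finset.range m, f j) := by
    intro r
    induction r with
    | zero => simp
    | succ r ih =>
      have : m * (r + 1) = m * r + m := by ring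
      rw [this, Finset.sum_range_add, ih, succ_nsmul]
      congr 1
      refine Finset.sum_congr rfl fun i hi => ?_
      rw [Finset.mem_range] at hi
      rw [Nat.mul_add_mod, Nat.mod_eq_of_lt hi]
  have hq : q = m * (q / m) + q % m := (Nat.div_add_mod q m).symm
  calc ∑ i ∈ Finset.range q, f (i % m)
      = ∑ i ∈ Finset.range (m * (q / m) + q % m), f (i % m) := by rw [← hq]
    _ = (∑ i ∈ Finset.range (m * (q / m)), f (i % m))
        + ∑ i ∈ Finset.range (q % m), f ((m * (q / m) + i) % m) := Finset.sum_range_add _ _ _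
    _ = (q / m) • (∑ j ∈ Finset.range m, f j) + ∑ j ∈ Finset.range (q % m), f j := by
        rw [hmul]
        congr 1
        refine Finset.sum_congr rfl fun i hi => ?_
        rw [Finset.mem_range] at hi
        have hi' : i < m := lt_of_lt_of_le hi (Nat.mod_lt q hm).le
        rw [Nat.mul_add_mod, Nat.mod_eq_of_lt hi']

/-- Existence of an Auerbach system: unit vectors `e` that are linearly independent together
with coordinate functionals `e'` of norm at most one. -/
theorem exists_auerbach {E : Type*} [NormedAddCommGroup E] [NormedSpace ℝ E]
    [FiniteDimensional ℝ E] (m : ℕ) (hm : 1 ≤ m) (hdim : Module.finrank ℝ E = m) :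
    ∃ (e : Fin m → E) (e' : Fin m → (E →L[ℝ] ℝ)),
      (∀ i, ‖e i‖ = 1) ∧ (∀ j, ‖e' j‖ ≤ 1) ∧
      (∀ i j, e' j (e i) = if i = j then 1 else 0) ∧
      LinearIndependent ℝ e := by
  haveI : Nonempty (Fin m) := ⟨⟨0, hm⟩⟩
  haveI : Nontrivial E := by
    apply Module.nontrivial_of_finrank_pos (R := ℝ) (M := E)
    omega
  classical
  let b : Module.Basis (Fin m) ℝ E := Module.finBasisOfFinrankEq ℝ E hdim
  set f : (Fin m → E) → ℝ := fun v => |b.det v| with hf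
  have hcont : Continuous f := by
    have h1 : Continuous fun v : Fin m → E => b.toMatrix v :=
      b.toMatrixEquiv.toLinearMap.continuous_of_finiteDimensional
    have h2 : Continuous fun v : Fin m → E => b.det v := by
      simpa [Module.Basis.det_apply] using h1.matrix_det
    exact h2.abs
  set S : Set (Fin m → E) := Set.univ.pi (fun _ => Metric.sphere (0 : E) 1) with hS
  have hScompact : IsCompact S := isCompact_univ_pi fun _ => isCompact_sphere _ _
  have hbne : ∀ i, ‖b i‖ ≠ 0 := fun i => norm_ne_zero_iff.2 (b.ne_zero i)
  set w : Fin m → E := fun i => ‖b i‖⁻¹ • b i with hw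
  have hwS : w ∈ S := by
    intro i _
    simp only [w, mem_sphere_iff_norm, sub_zero, norm_smul, norm_inv, norm_norm]
    exact inv_mul_cancel₀ (hbne i)
  obtain ⟨v, hvS, hvmax⟩ := hScompact.exists_isMaxOn ⟨w, hwS⟩ hcont.continuousOn
  have hvnorm : ∀ i, ‖v i‖ = 1 := by
    intro i
    have := hvS i (Set.mem_univ i)
    simpa [mem_sphere_iff_norm] using this
  have hfw : 0 < f w := by
    have : b.det w = (∏ i, ‖b i‖⁻¹) • b.det b :=
      b.det.toMultilinearMap.map_smul_univ _ b
    rw [hf]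
    simp only [this, Module.Basis.det_self, smul_eq_mul, mul_one, abs_prod]
    exact Finset.prod_pos fun i _ => abs_pos.2 (inv_ne_zero (hbne i))
  have hfv : 0 < f v := lt_of_lt_of_le hfw (hvmax hwS)
  have hD : b.det v ≠ 0 := fun h => by simp [hf, h] at hfv
  have hind : LinearIndependent ℝ v :=
    ((Module.Basis.is_basis_iff_det b).mpr (isUnit_iff_ne_zero.2 hD)).1
  -- key estimate from maximality
  have key : ∀ (j : Fin m) (x : E), |b.det (Function.update v j x)| ≤ ‖x‖ * |b.det v| := by
    intro j x
    rcases eq_or_ne x 0 with rfl | hx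
    · simp
    · have hxn : ‖x‖ ≠ 0 := norm_ne_zero_iff.2 hx
      set u : E := ‖x‖⁻¹ • x with hu
      have hun : ‖u‖ = 1 := by
        simp only [hu, norm_smul, norm_inv, norm_norm]
        exact inv_mul_cancel₀ hxn
      have hmem : Function.update v j u ∈ S := by
        intro i _
        rcases eq_or_ne i j with rfl | h
        · simpa [mem_sphere_iff_norm] using hun
        · simpa [Function.update_of_ne h, mem_sphere_iff_norm] using hvnorm i
      have hle : f (Function.update v j u) ≤ f v := hvmax hmem
      have hxu : x = ‖x‖ • u := by
        rw [hu, smul_smul, mul_inv_cancel₀ hxn, one_smul]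
      calc |b.det (Function.update v j x)|
          = |b.det (Function.update v j (‖x‖ • u))| := by rw [← hxu]
        _ = |‖x‖ • b.det (Function.update v j u)| := by
            rw [b.det.map_update_smul]
        _ = ‖x‖ * |b.det (Function.update v j u)| := by
            rw [smul_eq_mul, abs_mul, abs_of_nonneg (norm_nonneg x)]
        _ ≤ ‖x‖ * |b.det v| :=
            mul_le_mul_of_nonneg_left hle (norm_nonneg x)
  -- the coordinate functionals
  set l : Fin m → (E →ₗ[ℝ] ℝ) :=
    fun j => (b.det v)⁻¹ • (b.det.toMultilinearMap.toLinearMap v j) with hl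
  have hlapply : ∀ (j : Fin m) (x : E),
      l j x = (b.det v)⁻¹ * b.det (Function.update v j x) := by
    intro j x
    simp [hl, MultilinearMap.toLinearMap]
  refine ⟨v, fun j => LinearMap.toContinuousLinearMap (l j), hvnorm, ?_, ?_, hind⟩
  · intro j
    refine ContinuousLinearMap.opNorm_le_bound _ zero_le_one fun x => ?_
    have : |l j x| ≤ ‖x‖ := by
      rw [hlapply]
      calc |(b.det v)⁻¹ * b.det (Function.update v j x)|
          = |b.det v|⁻¹ * |b.det (Function.update v j x)| := by rw [abs_mul, abs_inv]
        _ ≤ |b.det v|⁻¹ * (‖x‖ * |b.det v|) :=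
            mul_le_mul_of_nonneg_left (key j x) (by positivity)
        _ = ‖x‖ := by
            field_simp
    simpa [Real.norm_eq_abs, one_mul] using this
  · intro i j
    rcases eq_or_ne i j with rfl | h
    · rw [if_pos rfl]
      simp only [LinearMap.coe_toContinuousLinearMap', hlapply]
      rw [Function.update_eq_self, inv_mul_cancel₀ hD]
    · rw [if_neg h]
      simp only [LinearMap.coe_toContinuousLinearMap', hlapply]
      have : b.det (Function.update v j (v i)) = 0 := by
        apply b.det.map_eq_zero_of_eq _ (i := i) (j := j)
        · rw [Function.update_of_ne h, Function.update_self]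
        · exact h
      rw [this, mul_zero]

set_option maxHeartbeats 1000000 in
/-- Auerbach-basis decomposition of the identity of an `m`-dimensional normed space
into rank-one operators of norm one, together with the subdivision `C_i = (1/m) B_{i mod m}`
whose partial sums have norm at most `2`. -/
theorem auerbach_decomposition_of_id {E : Type*}
    [NormedAddCommGroup E] [NormedSpace ℝ E] [FiniteDimensional ℝ E]
    (m : ℕ) (hm : 1 ≤ m) (hdim : Module.finrank ℝ E = m) :
    ∃ B : ℕ → (E →L[ℝ] E),
      (∀ j < m, ∃ (e' : E →L[ℝ] ℝ) (e : E), B j = e'.smulRight e) ∧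
      (∀ j < m, ‖B j‖ = 1) ∧
      (∑ j ∈ Finset.range m, B j = ContinuousLinearMap.id ℝ E) ∧
      -- the subdivided operators C_i := (1/m) • B (i % m)
      ((∑ i ∈ Finset.range (m ^ 2), ((m : ℝ)⁻¹) • B (i % m))
          = ContinuousLinearMap.id ℝ E) ∧
      (∀ q, 1 ≤ q → q ≤ m ^ 2 →
        ‖∑ i ∈ Finset.range q, ((m : ℝ)⁻¹) • B (i % m)‖ ≤ 2) := by
  classical
  obtain ⟨e, e', he, he'le, heval, hind⟩ := exists_auerbach m hm hdim
  haveI : Nonempty (Fin m) := ⟨⟨0, hm⟩⟩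
  have hm0 : 0 < m := hm
  have hmR : ((m : ℝ)) ≠ 0 := Nat.cast_ne_zero.2 (by omega)
  set B' : Fin m → (E →L[ℝ] E) := fun j => (e' j).smulRight (e j) with hB'
  set B : ℕ → (E →L[ℝ] E) := fun n => if h : n < m then B' ⟨n, h⟩ else 0 with hB
  -- the norm of each B'
  have hnorm' : ∀ j : Fin m, ‖B' j‖ = 1 := by
    intro j
    rw [hB']
    rw [ContinuousLinearMap.norm_smulRight_apply, he j, mul_one]
    refine le_antisymm (he'le j) ?_
    have h1 : e' j (e j) = 1 := by simpa using heval j j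
    have := (e' j).le_opNorm (e j)
    rw [h1, he j, mul_one] at this
    simpa using this
  have hBeq : ∀ j : Fin m, B (j : ℕ) = B' j := by
    intro j
    simp [hB, j.isLt]
  -- the sum over a full period is the identity
  have hsum : ∑ j ∈ Finset.range m, B j = ContinuousLinearMap.id ℝ E := by
    rw [Finset.sum_range fun i => B i]
    have : ∀ j : Fin m, B (j : ℕ) = B' j := hBeq
    rw [Finset.sum_congr rfl fun j _ => this j]
    -- prove equality of continuous linear maps via the basis e
    have hcard : Fintype.card (Fin m) = Module.finrank ℝ E := by simp [hdim]
    set bv := basisOfLinearIndependentOfCardEqFinrank hind hcard with hbv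
    have hbvi : ∀ i, bv i = e i := fun i => by
      rw [hbv, coe_basisOfLinearIndependentOfCardEqFinrank]
    apply ContinuousLinearMap.coe_injective
    apply Module.Basis.ext bv
    intro i
    rw [hbvi]
    simp only [ContinuousLinearMap.coe_sum', ContinuousLinearMap.coe_coe,
      Finset.sum_apply, hB', ContinuousLinearMap.smulRight_apply,
      ContinuousLinearMap.coe_id', LinearMap.coe_toContinuousLinearMap',
      id_eq, ContinuousLinearMap.coe_id, LinearMap.id_coe]
    have : ∀ j : Fin m, e' j (e i) • e j = if i = j then e j else 0 := by
      intro j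
      rw [heval i j]
      split <;> simp
    rw [Finset.sum_congr rfl fun j _ => this j]
    simp
  have hid_le : ‖(ContinuousLinearMap.id ℝ E : E →L[ℝ] E)‖ ≤ 1 :=
    ContinuousLinearMap.norm_id_le
  -- general formula for partial sums
  have hT : ∀ q : ℕ, ∑ i ∈ Finset.range q, ((m : ℝ)⁻¹) • B (i % m)
      = (q / m) • (((m : ℝ)⁻¹) • ContinuousLinearMap.id ℝ E)
        + ∑ j ∈ Finset.range (q % m), ((m : ℝ)⁻¹) • B j := by
    intro q
    rw [sum_range_mod (fun j => ((m : ℝ)⁻¹) • B j) m hm0 q]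
    congr 2
    rw [← Finset.smul_sum, hsum]
  refine ⟨B, ?_, ?_, hsum, ?_, ?_⟩
  · intro j hj
    exact ⟨e' ⟨j, hj⟩, e ⟨j, hj⟩, by simp [hB, hj, hB']⟩
  · intro j hj
    rw [show B j = B' ⟨j, hj⟩ by simp [hB, hj], hnorm']
  · rw [hT (m ^ 2)]
    have h1 : m ^ 2 / m = m := by
      rw [pow_two]
      exact Nat.mul_div_cancel_left m hm0
    have h2 : m ^ 2 % m = 0 := by
      rw [pow_two]
      exact Nat.mul_mod_right m m
    rw [h1, h2]
    simp only [Finset.range_zero, Finset.sum_empty, add_zero]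
    rw [← Nat.cast_smul_eq_nsmul ℝ m, smul_smul, mul_inv_cancel₀ hmR, one_smul]
  · intro q hq1 hq2
    rw [hT q]
    have hdivle : (q / m : ℕ) ≤ m := by
      have : q / m ≤ m ^ 2 / m := Nat.div_le_div_right hq2
      rwa [pow_two, Nat.mul_div_cancel_left m hm0] at this
    have hmodlt : q % m < m := Nat.mod_lt q hm0
    have hinner : ‖((m : ℝ)⁻¹ • ContinuousLinearMap.id ℝ E : E →L[ℝ] E)‖ ≤ (m : ℝ)⁻¹ := by
      calc ‖((m : ℝ)⁻¹ • ContinuousLinearMap.id ℝ E : E →L[ℝ] E)‖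
          ≤ ‖(m : ℝ)⁻¹‖ * ‖(ContinuousLinearMap.id ℝ E : E →L[ℝ] E)‖ := ContinuousLinearMap.opNorm_smul_le _ _
        _ ≤ (m : ℝ)⁻¹ * 1 := by
            apply mul_le_mul _ hid_le (norm_nonneg _) (by positivity)
            simp [Real.norm_eq_abs, abs_inv, Nat.abs_cast]
        _ = (m : ℝ)⁻¹ := mul_one _
    have hpart1 : ‖(q / m : ℕ) • (((m : ℝ)⁻¹) • ContinuousLinearMap.id ℝ E)‖ ≤ 1 := by
      rw [← Nat.cast_smul_eq_nsmul ℝ (q / m)]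
      calc ‖((q / m : ℕ) : ℝ) • (((m : ℝ)⁻¹) • ContinuousLinearMap.id ℝ E)‖
          ≤ ‖((q / m : ℕ) : ℝ)‖ * ‖((m : ℝ)⁻¹ • ContinuousLinearMap.id ℝ E : E →L[ℝ] E)‖ :=
            ContinuousLinearMap.opNorm_smul_le _ _
        _ ≤ (m : ℝ) * (m : ℝ)⁻¹ := by
            apply mul_le_mul _ hinner (norm_nonneg _) (Nat.cast_nonneg m)
            simp only [Real.norm_eq_abs, Nat.abs_cast]
            exact_mod_cast hdivle
        _ = 1 := mul_inv_cancel₀ hmR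
    have hpart2 : ‖∑ j ∈ Finset.range (q % m), ((m : ℝ)⁻¹) • B j‖ ≤ 1 := by
      calc ‖∑ j ∈ Finset.range (q % m), ((m : ℝ)⁻¹) • B j‖
          ≤ ∑ j ∈ Finset.range (q % m), ‖((m : ℝ)⁻¹) • B j‖ := norm_sum_le _ _
        _ ≤ ∑ j ∈ Finset.range (q % m), (m : ℝ)⁻¹ := by
            refine Finset.sum_le_sum fun j hj => ?_
            rw [Finset.mem_range] at hj
            have hjm : j < m := lt_trans hj hmodlt
            calc ‖((m : ℝ)⁻¹) • B j‖ ≤ ‖(m : ℝ)⁻¹‖ * ‖B j‖ := ContinuousLinearMap.opNorm_smul_le _ _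
              _ = (m : ℝ)⁻¹ := by
                  rw [show B j = B' ⟨j, hjm⟩ by simp [hB, hjm], hnorm', mul_one]
                  simp [Real.norm_eq_abs, abs_inv, Nat.abs_cast]
        _ = (q % m : ℕ) * (m : ℝ)⁻¹ := by
            rw [Finset.sum_const, Finset.card_range, nsmul_eq_mul]
        _ ≤ (m : ℝ) * (m : ℝ)⁻¹ := by
            apply mul_le_mul_of_nonneg_right _ (by positivity)
            exact_mod_cast hmodlt.le
        _ = 1 := mul_inv_cancel₀ hmR
    calc ‖(q / m : ℕ) • (((m : ℝ)⁻¹) • ContinuousLinearMap.id ℝ E)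
          + ∑ j ∈ Finset.range (q % m), ((m : ℝ)⁻¹) • B j‖
        ≤ ‖(q / m : ℕ) • (((m : ℝ)⁻¹) • ContinuousLinearMap.id ℝ E)‖
          + ‖∑ j ∈ Finset.range (q % m), ((m : ℝ)⁻¹) • B j‖ := norm_add_le _ _
      _ ≤ 1 + 1 := add_le_add hpart1 hpart2
      _ = 2 := by norm_num
end
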